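/- arXiv:1608.01805 — 9 statements merged into one kernel-verified Lean document; each statement's English description precedes it below -/
import Mathlib

section
/- Let P and Q be probability measures on a measurable space with densities p and q with respect to a dominating σ-finite measure μ. For 1 < α < β, the Tsallis divergence T_α(P||Q) = (1/(α-1))(∫ (p/q)^α q dμ - 1) is at most T_β(P||Q). -/
open MeasureTheory ENNReal

/-- Monotonicity of the Tsallis divergence `T_α(P||Q)` in the index `α` for `1 < α < β`,
where `P = p·μ` and `Q = q·μ` are probability measures with densities `p, q` w.r.t. a
σ-finite measure `μ`, and `T_α = (α-1)⁻¹ (∫ (p/q)^α q dμ - 1)` (values in `[0,∞]`). -/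
theorem tsallis_monotone {Ω : Type*} [MeasurableSpace Ω] (μ : Measure Ω) [SigmaFinite μ]
    (p q : Ω → ℝ) (hpm : Measurable p) (hqm : Measurable q)
    (hp : ∀ x, 0 ≤ p x) (hq : ∀ x, 0 ≤ q x)
    (hP : ∫⁻ x, ENNReal.ofReal (p x) ∂μ = 1)
    (hQ : ∫⁻ x, ENNReal.ofReal (q x) ∂μ = 1)
    (α β : ℝ) (hα : 1 < α) (hαβ : α < β) :
    ENNReal.ofReal (α - 1)⁻¹ *
        ((∫⁻ x, ENNReal.ofReal ((p x / q x) ^ α * q x) ∂μ) - 1)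
      ≤ ENNReal.ofReal (β - 1)⁻¹ *
        ((∫⁻ x, ENNReal.ofReal ((p x / q x) ^ β * q x) ∂μ) - 1) := by
  have hα1 : (0:ℝ) < α - 1 := by linarith
  have hβ1 : (0:ℝ) < β - 1 := by linarith
  set ν : Measure Ω := μ.withDensity (fun x => ENNReal.ofReal (p x)) with hν
  set f : Ω → ℝ≥0∞ := fun x => ENNReal.ofReal (p x / q x) with hf
  have hfm : Measurable f := (hpm.div hqm).ennreal_ofReal
  -- rewrite the integrals
  have key : ∀ γ : ℝ, 1 < γ →
      (∫⁻ x, ENNReal.ofReal ((p x / q x) ^ γ * q x) ∂μ) = ∫⁻ x, f x ^ (γ - 1) ∂ν := by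
    intro γ hγ
    rw [hν, lintegral_withDensity_eq_lintegral_mul _ hpm.ennreal_ofReal
      ((hfm.pow_const _))]
    refine lintegral_congr fun x => ?_
    simp only [Pi.mul_def, hf]
    rcases eq_or_lt_of_le (hq x) with hq0 | hq0
    · rw [← hq0]
      simp [Real.zero_rpow (show γ ≠ 0 by linarith),
        ENNReal.zero_rpow_of_pos (show (0:ℝ) < γ - 1 by linarith)]
    rcases eq_or_lt_of_le (hp x) with hp0 | hp0
    · rw [← hp0]
      simp [Real.zero_rpow (show γ ≠ 0 by linarith),
        ENNReal.zero_rpow_of_pos (show (0:ℝ) < γ - 1 by linarith)]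
    have hr : 0 < p x / q x := div_pos hp0 hq0
    have : (p x / q x) ^ γ * q x = (p x / q x) ^ (γ - 1) * p x := by
      have : (p x / q x) ^ γ = (p x / q x) ^ (γ - 1) * (p x / q x) := by
        rw [← Real.rpow_add_one hr.ne' (γ - 1)]; ring_nf
      rw [this, mul_assoc, div_mul_cancel₀ _ hq0.ne']
    rw [this, ENNReal.ofReal_mul (Real.rpow_nonneg (le_of_lt hr) _),
      ENNReal.ofReal_rpow_of_nonneg hr.le (by linarith), mul_comm]
  rw [key α hα, key β (hα.trans hαβ)]
  have hνuniv : ν Set.univ = 1 := by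
    rw [hν, withDensity_apply _ MeasurableSet.univ, setLIntegral_univ, hP]
  set Mα := ∫⁻ x, f x ^ (α - 1) ∂ν with hMα
  set Mβ := ∫⁻ x, f x ^ (β - 1) ∂ν with hMβ
  set s : ℝ := (α - 1) / (β - 1) with hs
  have hs0 : 0 < s := div_pos hα1 hβ1
  have hs1 : s < 1 := (div_lt_one hβ1).mpr (by linarith)
  -- Hölder: Mα ≤ Mβ ^ s
  have holder : Mα ≤ Mβ ^ s := by
    have hconj : ((β-1)/(α-1)).HolderConjugate (((β-1)/(α-1))/((β-1)/(α-1) - 1)) := by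
      refine Real.HolderConjugate.conjExponent ?_
      rw [lt_div_iff₀ hα1]; linarith
    have := ENNReal.lintegral_mul_le_Lp_mul_Lq ν hconj
      ((hfm.pow_const (α-1)).aemeasurable) (aemeasurable_const (b := (1:ℝ≥0∞)))
    simp only [Pi.mul_apply, mul_one, ENNReal.one_rpow, lintegral_const, hνuniv, one_mul,
      ENNReal.one_rpow] at this
    refine le_trans this (le_of_eq ?_)
    rw [hMβ, hs]
    congr 1
    · refine lintegral_congr fun x => ?_
      rw [← ENNReal.rpow_mul]
      congr 1
      field_simp
    · rw [one_div_div]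
  by_cases hMα1 : Mα ≤ 1
  · rw [tsub_eq_zero_of_le hMα1, mul_zero]; exact zero_le
  push_neg at hMα1
  by_cases hMβtop : Mβ = ⊤
  · rw [hMβtop]
    rw [ENNReal.top_sub (by norm_num), ENNReal.mul_top
      (ENNReal.ofReal_pos.mpr (by positivity)).ne']
    exact le_top
  have hMαtop : Mα ≠ ⊤ := by
    intro h
    have htop : Mβ ^ s = ⊤ := top_le_iff.mp (h ▸ holder)
    rw [ENNReal.rpow_eq_top_iff] at htop
    rcases htop with ⟨_, hneg⟩ | ⟨htop, _⟩
    · exact absurd hneg (not_lt.mpr hs0.le)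
    · exact hMβtop htop
  set a : ℝ := Mα.toReal with ha
  set b : ℝ := Mβ.toReal with hb
  have hMαa : Mα = ENNReal.ofReal a := (ENNReal.ofReal_toReal hMαtop).symm
  have hMβb : Mβ = ENNReal.ofReal b := (ENNReal.ofReal_toReal hMβtop).symm
  have ha1 : 1 < a := by
    rw [hMαa] at hMα1; exact_mod_cast (ENNReal.one_lt_ofReal).mp hMα1
  have hb0 : 0 ≤ b := ENNReal.toReal_nonneg
  have habs : a ≤ b ^ s := by
    have := ENNReal.toReal_mono (ENNReal.rpow_ne_top_of_nonneg hs0.le hMβtop) holder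
    rwa [← ENNReal.toReal_rpow] at this
  -- AM-GM: b^s ≤ s*b + (1-s)
  have amgm : b ^ s ≤ s * b + (1 - s) := by
    have := Real.geom_mean_le_arith_mean2_weighted hs0.le (by linarith : (0:ℝ) ≤ 1 - s)
      hb0 zero_le_one (by ring)
    simpa [Real.rpow_natCast] using this
  have hreal : (α - 1)⁻¹ * (a - 1) ≤ (β - 1)⁻¹ * (b - 1) := by
    have h1 : a - 1 ≤ s * (b - 1) := by nlinarith
    rw [hs] at h1
    have h2 : (α - 1)⁻¹ * (a - 1) ≤ (α - 1)⁻¹ * ((α - 1) / (β - 1) * (b - 1)) :=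
      mul_le_mul_of_nonneg_left h1 (by positivity)
    have h3 : (α - 1)⁻¹ * ((α - 1) / (β - 1) * (b - 1)) = (β - 1)⁻¹ * (b - 1) := by
      field_simp
    linarith
  rw [hMαa, hMβb, ← ENNReal.ofReal_one, ← ENNReal.ofReal_sub _ zero_le_one,
    ← ENNReal.ofReal_sub _ zero_le_one, ← ENNReal.ofReal_mul (by positivity),
    ← ENNReal.ofReal_mul (by positivity)]
  exact ENNReal.ofReal_le_ofReal hreal
end

section
/- For α ≥ 2 and a random variable η ≥ -1 with E η = 0, one has (1/(α-1)) (E(1+η)^α - 1) ≥ ((α-1)/3^α) E|η|^α. -/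
open MeasureTheory

lemma pow3_bound {α : ℝ} (hα : 2 ≤ α) : (α - 1) ^ 2 ≤ (3 : ℝ) ^ α := by
  have h2 : (1 : ℝ) ≤ α / 2 := by linarith
  have hb : 1 + (α / 2) * 2 ≤ ((1 : ℝ) + 2) ^ (α / 2) :=
    one_add_mul_self_le_rpow_one_add (by norm_num) h2
  have h3 : (3 : ℝ) ^ α = ((3 : ℝ) ^ (α / 2)) ^ 2 := by
    rw [← Real.rpow_natCast ((3 : ℝ) ^ (α / 2)) 2, ← Real.rpow_mul (by norm_num)]
    norm_num
  have hnn : (0:ℝ) ≤ (3 : ℝ) ^ (α / 2) := (Real.rpow_pos_of_pos (by norm_num) _).le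
  rw [h3]
  have h13 : ((1:ℝ) + 2) = 3 := by norm_num
  rw [h13] at hb
  nlinarith

lemma key_pointwise {α : ℝ} (hα : 2 ≤ α) {x : ℝ} (hx : -1 ≤ x) :
    (α - 1) ^ 2 / 3 ^ α * |x| ^ α ≤ (1 + x) ^ α - 1 - α * x := by
  have h3pos : (0 : ℝ) < 3 ^ α := Real.rpow_pos_of_pos (by norm_num) α
  have hc1 : (α - 1) ^ 2 / 3 ^ α ≤ 1 := (div_le_one h3pos).2 (pow3_bound hα)
  have hcpos : 0 ≤ (α - 1) ^ 2 / 3 ^ α := by positivity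
  have h1x : 0 ≤ 1 + x := by linarith
  have hαpos : (0 : ℝ) < α := by linarith
  have habsnn : 0 ≤ |x| ^ α := Real.rpow_nonneg (abs_nonneg x) α
  rcases le_or_gt x (-2 / α) with hA | hB
  · -- x ≤ -2/α : here -1-αx ≥ 1 and c|x|^α ≤ 1
    have hax : x * α ≤ -2 := (le_div_iff₀ hαpos).mp hA
    have hxneg : x ≤ 0 := by nlinarith
    have hxabs : |x| ≤ 1 := abs_le.2 ⟨hx, by linarith⟩
    have h1 : |x| ^ α ≤ 1 := Real.rpow_le_one (abs_nonneg x) hxabs (by linarith)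
    have h2 : (0 : ℝ) ≤ (1 + x) ^ α := Real.rpow_nonneg h1x α
    nlinarith [mul_le_one₀ hc1 habsnn h1]
  · rcases le_or_gt x 1 with hx1 | hx1
    · -- -2/α < x ≤ 1
      have hax : -2 < x * α := (div_lt_iff₀ hαpos).mp hB
      have hb0 : 0 ≤ 1 + (α / 2) * x := by nlinarith
      have hbern : 1 + (α / 2) * x ≤ (1 + x) ^ (α / 2) :=
        one_add_mul_self_le_rpow_one_add hx (by linarith)
      have hsq : (1 + (α / 2) * x) ^ 2 ≤ ((1 + x) ^ (α / 2)) ^ 2 :=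
        pow_le_pow_left₀ hb0 hbern 2
      have heq : ((1 + x) ^ (α / 2)) ^ 2 = (1 + x) ^ α := by
        rw [← Real.rpow_natCast ((1 + x) ^ (α / 2)) 2, ← Real.rpow_mul h1x]
        norm_num
      have hquad : 1 + α * x + α ^ 2 / 4 * x ^ 2 ≤ (1 + x) ^ α := by
        rw [← heq]; nlinarith [hsq]
      have habs : |x| ^ α ≤ x ^ 2 := by
        rcases eq_or_ne x 0 with rfl | hne
        · simp [Real.zero_rpow (ne_of_gt hαpos)]
        · have h0 : 0 < |x| := abs_pos.2 hne
          have hle1 : |x| ≤ 1 := abs_le.2 ⟨hx, hx1⟩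
          calc |x| ^ α ≤ |x| ^ (2 : ℝ) :=
                Real.rpow_le_rpow_of_exponent_ge h0 hle1 hα
            _ = x ^ 2 := by
                rw [show (2:ℝ) = ((2:ℕ):ℝ) by norm_num, Real.rpow_natCast, sq_abs]
      have hA1 : (α-1)^2/3^α * |x|^α ≤ (α-1)^2/3^α * x^2 :=
        mul_le_mul_of_nonneg_left habs hcpos
      have hA2 : (α-1)^2/3^α * x^2 ≤ 1 * x^2 :=
        mul_le_mul_of_nonneg_right hc1 (sq_nonneg x)
      have hA3 : (0:ℝ) ≤ (α^2/4 - 1) * x^2 :=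
        mul_nonneg (by nlinarith) (sq_nonneg x)
      linarith
    · -- 1 < x
      have hx0 : 0 < x := by linarith
      have hx1' : (1 : ℝ) ≤ x := hx1.le
      have hxnn : (0:ℝ) ≤ x := hx0.le
      have hxa : (0:ℝ) ≤ x ^ α := Real.rpow_nonneg hxnn α
      have hinv : (0:ℝ) ≤ 1 / x := by positivity
      have hb : 1 + (α / 2) * (1 / x) ≤ (1 + 1 / x) ^ (α / 2) :=
        one_add_mul_self_le_rpow_one_add (by linarith) (by linarith)
      have heq2 : ((1 + 1 / x) ^ (α / 2)) ^ 2 = (1 + 1 / x) ^ α := by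
        rw [← Real.rpow_natCast ((1 + 1/x) ^ (α / 2)) 2, ← Real.rpow_mul (by positivity)]
        norm_num
      have hsq : (1 + (α / 2) * (1 / x)) ^ 2 ≤ (1 + 1 / x) ^ α := by
        rw [← heq2]; exact pow_le_pow_left₀ (by positivity) hb 2
      have hmul : (1 + x) ^ α = x ^ α * (1 + 1 / x) ^ α := by
        rw [← Real.mul_rpow hxnn (by positivity)]
        congr 1
        field_simp
        ring
      have hxam : x ≤ x ^ (α - 1) := by
        calc x = x ^ (1 : ℝ) := (Real.rpow_one x).symm
          _ ≤ x ^ (α - 1) := Real.rpow_le_rpow_of_exponent_le hx1' (by linarith)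
      have h2' : (1 : ℝ) ≤ x ^ (α - 2) := by
        calc (1:ℝ) = x ^ (0:ℝ) := (Real.rpow_zero x).symm
          _ ≤ x ^ (α - 2) := Real.rpow_le_rpow_of_exponent_le hx1' (by linarith)
      have eu1 : x ^ α * (1 / x) = x ^ (α - 1) := by
        rw [Real.rpow_sub hx0, Real.rpow_one]; ring
      have eu2 : x ^ α * (1 / x) ^ 2 = x ^ (α - 2) := by
        rw [Real.rpow_sub hx0, show ((2:ℝ)) = ((2:ℕ):ℝ) by norm_num,
          Real.rpow_natCast]
        field_simp
      have hmono := mul_le_mul_of_nonneg_left hsq hxa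
      have expand : x ^ α * (1 + (α / 2) * (1 / x)) ^ 2
          = x ^ α + α * x ^ (α - 1) + α ^ 2 / 4 * x ^ (α - 2) := by
        have h : x ^ α * (1 + (α / 2) * (1 / x)) ^ 2
            = x ^ α + α * (x ^ α * (1 / x)) + α ^ 2 / 4 * (x ^ α * (1 / x) ^ 2) := by
          ring
        rw [h, eu1, eu2]
      have main : x ^ α + α * x + 1 ≤ (1 + x) ^ α := by
        rw [hmul]
        have e1 : α * x ≤ α * x ^ (α - 1) :=
          mul_le_mul_of_nonneg_left hxam hαpos.le
        have ha4 : (1:ℝ) ≤ α ^ 2 / 4 := by nlinarith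
        have e2 : (1:ℝ) ≤ α ^ 2 / 4 * x ^ (α - 2) := by
          calc (1:ℝ) ≤ α ^ 2 / 4 := ha4
            _ ≤ α ^ 2 / 4 * x ^ (α - 2) := le_mul_of_one_le_right (by positivity) h2'
        linarith [hmono, expand ▸ hmono]
      have habs : |x| = x := abs_of_pos hx0
      rw [habs]
      have hc2 : (α-1)^2/3^α * x ^ α ≤ 1 * x ^ α :=
        mul_le_mul_of_nonneg_right hc1 hxa
      linarith

/-- For `α ≥ 2` and a random variable `η ≥ -1` with `E η = 0`:
`(α-1)⁻¹ (E (1+η)^α - 1) ≥ ((α-1)/3^α) E |η|^α`. -/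
theorem tsallis_lower_bound {Ω : Type*} [MeasureSpace Ω]
    [IsProbabilityMeasure (volume : Measure Ω)]
    (η : Ω → ℝ) (hge : ∀ ω, -1 ≤ η ω) (hmean : (∫ ω, η ω) = 0)
    (α : ℝ) (hα : 2 ≤ α)
    (hint : Integrable (fun ω => (1 + η ω) ^ α))
    (hint' : Integrable (fun ω => |η ω| ^ α)) :
    ((α - 1) / 3 ^ α) * (∫ ω, |η ω| ^ α)
      ≤ (α - 1)⁻¹ * ((∫ ω, (1 + η ω) ^ α) - 1) := by
  have hαpos : (0:ℝ) < α := by linarith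
  have hα1 : (0:ℝ) < α - 1 := by linarith
  -- measurability of η
  have hmeas : AEStronglyMeasurable η (volume : Measure Ω) := by
    have hcont : Continuous fun y : ℝ => y ^ (α⁻¹) - 1 :=
      (Real.continuous_rpow_const (by positivity)).sub continuous_const
    have hcomp := hcont.comp_aestronglyMeasurable hint.aestronglyMeasurable
    have heq : (fun ω => ((1 + η ω) ^ α) ^ (α⁻¹) - 1) = η := by
      funext ω
      rw [Real.rpow_rpow_inv (by linarith [hge ω]) (ne_of_gt hαpos)]
      ring
    exact heq ▸ hcomp
  -- integrability of η
  have hint_eta : Integrable η := by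
    apply Integrable.mono' (hint'.add (integrable_const 1)) hmeas
    filter_upwards with ω
    rcases le_or_gt |η ω| 1 with h1 | h1
    · have : (0:ℝ) ≤ |η ω| ^ α := Real.rpow_nonneg (abs_nonneg _) α
      simpa using by linarith [this, h1]
    · have : |η ω| ≤ |η ω| ^ α := by
        calc |η ω| = |η ω| ^ (1:ℝ) := (Real.rpow_one _).symm
          _ ≤ |η ω| ^ α := Real.rpow_le_rpow_of_exponent_le h1.le (by linarith)
      simpa using by linarith
  set c : ℝ := (α - 1) ^ 2 / 3 ^ α with hc
  have hIright : Integrable (fun ω => (1 + η ω) ^ α - 1 - α * η ω) :=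
    (hint.sub (integrable_const 1)).sub (hint_eta.const_mul α)
  have hInt : ∫ ω, c * |η ω| ^ α ≤ ∫ ω, ((1 + η ω) ^ α - 1 - α * η ω) :=
    integral_mono (hint'.const_mul c) hIright fun ω => key_pointwise hα (hge ω)
  rw [integral_const_mul] at hInt
  have hR : ∫ ω, ((1 + η ω) ^ α - 1 - α * η ω)
      = (∫ ω, (1 + η ω) ^ α) - 1 := by
    calc ∫ ω, ((1 + η ω) ^ α - 1 - α * η ω)
        = (∫ ω, ((1 + η ω) ^ α - 1)) - ∫ ω, α * η ω :=
          integral_sub (hint.sub (integrable_const 1)) (hint_eta.const_mul α)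
      _ = ((∫ ω, (1 + η ω) ^ α) - ∫ _ω, (1:ℝ)) - α * ∫ ω, η ω := by
          rw [integral_sub hint (integrable_const 1), integral_const_mul]
      _ = (∫ ω, (1 + η ω) ^ α) - 1 := by rw [hmean]; simp
  rw [hR] at hInt
  have h3pos : (0 : ℝ) < 3 ^ α := Real.rpow_pos_of_pos (by norm_num) α
  have hχ : 0 ≤ ∫ ω, |η ω| ^ α :=
    integral_nonneg fun ω => Real.rpow_nonneg (abs_nonneg _) α
  have hne : α - 1 ≠ 0 := ne_of_gt hα1
  have h3ne : (3:ℝ) ^ α ≠ 0 := ne_of_gt h3pos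
  calc ((α - 1) / 3 ^ α) * (∫ ω, |η ω| ^ α)
      = (α - 1)⁻¹ * (c * ∫ ω, |η ω| ^ α) := by
        rw [hc]; field_simp
    _ ≤ (α - 1)⁻¹ * ((∫ ω, (1 + η ω) ^ α) - 1) :=
        mul_le_mul_of_nonneg_left hInt (by positivity)
end

section
/- Let X be a real random variable with density p such that C^α := ∫ p(x)^α / φ(x)^{α-1} dx is finite, where φ is the standard normal density and α > 1 with conjugate β = α/(α-1). Then for every c < 1/(2β), E e^{cX²} ≤ C / (1 - 2βc)^{1/(2β)}. -/
open MeasureTheory Real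

/-- The standard normal density on the real line. -/
noncomputable def stdNormalPDF (x : ℝ) : ℝ :=
  (Real.sqrt (2 * Real.pi))⁻¹ * Real.exp (-x ^ 2 / 2)

lemma stdNormalPDF_pos (x : ℝ) : 0 < stdNormalPDF x := by
  unfold stdNormalPDF
  positivity

lemma stdNormalPDF_measurable : Measurable stdNormalPDF := by
  unfold stdNormalPDF; fun_prop

/-- If `X` has density `p` with `∫ p^α / φ^{α-1} = C^α < ∞` (`α > 1`, `β = α/(α-1)`),
then `E e^{cX²} ≤ C / (1 - 2βc)^{1/(2β)}` for all `c < 1/(2β)`. -/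
theorem gaussian_moment_bound (α β C : ℝ) (hα : 1 < α) (hβ : β = α / (α - 1)) (hC : 0 ≤ C)
    (p : ℝ → ℝ) (hpm : Measurable p) (hp : ∀ x, 0 ≤ p x) (hdens : (∫ x, p x) = 1)
    (hfin : Integrable (fun x => p x ^ α / stdNormalPDF x ^ (α - 1)))
    (hCdef : (∫ x, p x ^ α / stdNormalPDF x ^ (α - 1)) = C ^ α) :
    ∀ c : ℝ, c < 1 / (2 * β) →
      (∫⁻ x, ENNReal.ofReal (Real.exp (c * x ^ 2) * p x))
        ≤ ENNReal.ofReal (C / (1 - 2 * β * c) ^ (1 / (2 * β))) := by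
  intro c hc
  have hα0 : (0:ℝ) < α := by linarith
  have hα1 : (0:ℝ) < α - 1 := by linarith
  have hconj : α.HolderConjugate β := (Real.holderConjugate_iff_eq_conjExponent hα).mpr hβ
  have hβ1 : 1 < β := hconj.symm.lt
  have hβ0 : (0:ℝ) < β := by linarith
  -- positivity of 1 - 2βc
  have hbc : β * c < 1 / 2 := by
    have := (mul_lt_mul_of_pos_left hc hβ0)
    calc β * c < β * (1 / (2 * β)) := this
      _ = 1 / 2 := by field_simp
  have hpos : (0:ℝ) < 1 - 2 * β * c := by linarith
  set γ : ℝ := (α - 1) / α with hγ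
  have hγ0 : 0 ≤ γ := by positivity
  have hγα : γ * α = α - 1 := by rw [hγ]; field_simp
  have hγβ : γ * β = 1 := by
    rw [hγ, hβ, div_mul_div_comm,
      div_eq_one_iff_eq (mul_ne_zero hα0.ne' hα1.ne')]
    ring
  set f : ℝ → ENNReal := fun x => ENNReal.ofReal (p x / stdNormalPDF x ^ γ) with hf
  set g : ℝ → ENNReal := fun x =>
    ENNReal.ofReal (Real.exp (c * x ^ 2) * stdNormalPDF x ^ γ) with hg
  have hfm : AEMeasurable f := by
    apply Measurable.aemeasurable
    exact (hpm.div ((stdNormalPDF_measurable).pow_const γ)).ennreal_ofReal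
  have hgm : AEMeasurable g := by
    apply Measurable.aemeasurable
    exact ((measurable_id.pow_const 2).const_mul c).exp.mul
      ((stdNormalPDF_measurable).pow_const γ) |>.ennreal_ofReal
  have hfg : ∀ x, (f * g) x = ENNReal.ofReal (Real.exp (c * x ^ 2) * p x) := by
    intro x
    have hφ := stdNormalPDF_pos x
    have hφγ : (0:ℝ) < stdNormalPDF x ^ γ := Real.rpow_pos_of_pos hφ γ
    simp only [Pi.mul_apply, hf, hg]
    rw [← ENNReal.ofReal_mul (div_nonneg (hp x) hφγ.le)]
    congr 1
    field_simp
  -- Hölder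
  have holder := ENNReal.lintegral_mul_le_Lp_mul_Lq volume hconj hfm hgm
  -- first factor
  have hfα : ∀ x, f x ^ α = ENNReal.ofReal (p x ^ α / stdNormalPDF x ^ (α - 1)) := by
    intro x
    have hφ := stdNormalPDF_pos x
    simp only [hf]
    rw [ENNReal.ofReal_rpow_of_nonneg (div_nonneg (hp x) (Real.rpow_nonneg hφ.le γ)) hα0.le]
    congr 1
    rw [Real.div_rpow (hp x) (Real.rpow_nonneg hφ.le γ), ← Real.rpow_mul hφ.le, hγα]
  have hF : (∫⁻ x, f x ^ α) = ENNReal.ofReal (C ^ α) := by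
    simp_rw [hfα]
    rw [← MeasureTheory.ofReal_integral_eq_lintegral_ofReal hfin]
    · rw [hCdef]
    · filter_upwards with x
      exact div_nonneg (Real.rpow_nonneg (hp x) α)
        (Real.rpow_nonneg (stdNormalPDF_pos x).le _)
  have hF' : (∫⁻ x, f x ^ α) ^ (1 / α) = ENNReal.ofReal C := by
    rw [hF, ENNReal.ofReal_rpow_of_nonneg (Real.rpow_nonneg hC α) hconj.one_div_nonneg,
      ← Real.rpow_mul hC, mul_one_div, div_self hα0.ne', Real.rpow_one]
  -- second factor
  have hb : (0:ℝ) < 1 / 2 - β * c := by linarith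
  have hgβ : ∀ x, g x ^ β = ENNReal.ofReal
      ((Real.sqrt (2 * Real.pi))⁻¹ * Real.exp (-(1 / 2 - β * c) * x ^ 2)) := by
    intro x
    have hφ := stdNormalPDF_pos x
    simp only [hg]
    rw [ENNReal.ofReal_rpow_of_nonneg (by positivity) hβ0.le]
    congr 1
    rw [Real.mul_rpow (Real.exp_nonneg _) (Real.rpow_nonneg hφ.le γ),
      ← Real.exp_mul, ← Real.rpow_mul hφ.le, hγβ, Real.rpow_one]
    unfold stdNormalPDF
    rw [mul_comm (Real.exp (c * x ^ 2 * β)) _, mul_assoc, ← Real.exp_add]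
    congr 2
    ring
  have hGint : Integrable (fun x : ℝ =>
      (Real.sqrt (2 * Real.pi))⁻¹ * Real.exp (-(1 / 2 - β * c) * x ^ 2)) :=
    (integrable_exp_neg_mul_sq hb).const_mul _
  have hGval : (∫ x : ℝ, (Real.sqrt (2 * Real.pi))⁻¹ * Real.exp (-(1 / 2 - β * c) * x ^ 2))
      = (1 - 2 * β * c) ^ (-(1/2) : ℝ) := by
    rw [MeasureTheory.integral_const_mul, integral_gaussian]
    have h2b : 1 - 2 * β * c = 2 * (1 / 2 - β * c) := by ring
    rw [Real.rpow_neg hpos.le, h2b, ← Real.sqrt_eq_rpow, ← Real.sqrt_inv, ← Real.sqrt_inv,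
      ← Real.sqrt_mul (by positivity)]
    congr 1
    have hπ := Real.pi_pos
    have h2 : (1:ℝ) - 2 * (β * c) ≠ 0 := by rw [← mul_assoc]; exact hpos.ne'
    field_simp [hb.ne', hπ.ne', h2]
  have hG : (∫⁻ x, g x ^ β) = ENNReal.ofReal ((1 - 2 * β * c) ^ (-(1/2) : ℝ)) := by
    simp_rw [hgβ]
    rw [← MeasureTheory.ofReal_integral_eq_lintegral_ofReal hGint, hGval]
    filter_upwards with x
    positivity
  have hG' : (∫⁻ x, g x ^ β) ^ (1 / β)
      = ENNReal.ofReal ((1 - 2 * β * c) ^ (-(1 / (2 * β)))) := by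
    rw [hG, ENNReal.ofReal_rpow_of_nonneg (Real.rpow_nonneg hpos.le _) (by positivity),
      ← Real.rpow_mul hpos.le]
    congr 2
    field_simp
  calc (∫⁻ x, ENNReal.ofReal (Real.exp (c * x ^ 2) * p x))
      = ∫⁻ x, (f * g) x := by simp_rw [hfg]
    _ ≤ (∫⁻ x, f x ^ α) ^ (1 / α) * (∫⁻ x, g x ^ β) ^ (1 / β) := holder
    _ = ENNReal.ofReal C * ENNReal.ofReal ((1 - 2 * β * c) ^ (-(1 / (2 * β)))) := by
        rw [hF', hG']
    _ = ENNReal.ofReal (C / (1 - 2 * β * c) ^ (1 / (2 * β))) := by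
        rw [← ENNReal.ofReal_mul hC]
        congr 1
        rw [Real.rpow_neg hpos.le]
        ring
end

section
/- Let X be a random variable with all moments finite. If the series Σ_{k≥0} (E H_k(X))²/k! converges, then E X^{2k} ≤ C e^k ((2k)!)^{1/2} for all k, where C² equals the sum of the series; in particular E e^{cX²} < ∞ for some c > 0. -/
open MeasureTheory

open Finset

noncomputable def hcoef (k j : ℕ) : ℝ :=
  if 2*j ≤ k then (k.factorial : ℝ) / (((k - 2*j).factorial : ℝ) * (j.factorial : ℝ) * 2^j) else 0

lemma hcoef_nonneg (k j : ℕ) : 0 ≤ hcoef k j := by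
  unfold hcoef; split <;> positivity

lemma hcoef_zero (k : ℕ) : hcoef (k+1) 0 = hcoef k 0 := by
  have h1 : ((k+1).factorial : ℝ) ≠ 0 := by positivity
  have h2 : (k.factorial : ℝ) ≠ 0 := by positivity
  simp [hcoef, div_self, h1, h2]

lemma hcoef_big (k j : ℕ) (h : k < 2*j) : hcoef k j = 0 := by
  simp [hcoef, Nat.not_le.mpr h, le_of_lt h]

lemma hcoef_rec (k i : ℕ) :
    hcoef (k+1) (i+1) = hcoef k (i+1) + ((k - 2*i : ℕ) : ℝ) * hcoef k i := by
  rcases le_or_gt (2*(i+1)) k with h1 | h1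
  · obtain ⟨m, rfl⟩ : ∃ m, k = m + 2*i + 2 := ⟨k - 2*i - 2, by omega⟩
    have e1 : m + 2*i + 2 + 1 - 2*(i+1) = m + 1 := by omega
    have e2 : m + 2*i + 2 - 2*(i+1) = m := by omega
    have e3 : m + 2*i + 2 - 2*i = m + 2 := by omega
    rw [hcoef, hcoef, hcoef, if_pos (by omega), if_pos (by omega), if_pos (by omega), e1, e2, e3]
    have f1 : ((m + 2*i + 2 + 1).factorial : ℝ) = (m + 2*i + 3) * (m + 2*i + 2).factorial := by
      rw [show m + 2*i + 2 + 1 = (m + 2*i + 2) + 1 by ring, Nat.factorial_succ]; push_cast; ring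
    have f2 : ((m + 1).factorial : ℝ) = (m + 1) * m.factorial := by
      rw [Nat.factorial_succ]; push_cast; ring
    have f3 : ((i + 1).factorial : ℝ) = (i + 1) * i.factorial := by
      rw [Nat.factorial_succ]; push_cast; ring
    have f4 : ((m + 2).factorial : ℝ) = (m + 2) * ((m+1) * m.factorial) := by
      rw [show m + 2 = (m+1)+1 by ring, Nat.factorial_succ, Nat.factorial_succ]; push_cast; ring
    rw [f1, f2, f3, f4]
    have h2 : (m.factorial : ℝ) ≠ 0 := by positivity
    have h3 : (i.factorial : ℝ) ≠ 0 := by positivity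
    field_simp
    push_cast
    ring
  · rcases le_or_gt (2*(i+1)) (k+1) with h2 | h2
    · -- k = 2i+1
      obtain rfl : k = 2*i+1 := by omega
      have e1 : 2*i+1+1 - 2*(i+1) = 0 := by omega
      have e3 : 2*i+1 - 2*i = 1 := by omega
      rw [hcoef, hcoef, if_pos (by omega), if_neg (by omega), e1, e3, hcoef, if_pos (by omega),
        show 2*i+1-2*i = 1 by omega]
      have f1 : ((2*i+1+1).factorial : ℝ) = (2*i+2) * (2*i+1).factorial := by
        rw [show 2*i+1+1 = (2*i+1)+1 by ring, Nat.factorial_succ]; push_cast; ring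
      have f3 : ((i + 1).factorial : ℝ) = (i + 1) * i.factorial := by
        rw [Nat.factorial_succ]; push_cast; ring
      rw [f1, f3]
      have h3 : (i.factorial : ℝ) ≠ 0 := by positivity
      simp [Nat.factorial]
      field_simp
      ring
    · rcases le_or_gt (2*i) k with h3 | h3
      · obtain rfl : k = 2*i := by omega
        rw [hcoef_big _ _ (by omega), hcoef_big _ _ (by omega), show 2*i - 2*i = 0 by omega]
        simp
      · rw [hcoef_big _ _ (by omega), hcoef_big _ _ (by omega), hcoef_big _ _ (by omega)]
        simp
open Polynomial in
theorem deriv_hermite (n : ℕ) : derivative (hermite (n+1)) = (n+1 : ℤ[X]) * hermite n := by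
  induction n with
  | zero => simp [hermite_one, hermite_zero]
  | succ n ih =>
    rw [hermite_succ (n+1), derivative_sub, derivative_mul, derivative_X, one_mul, ih,
      derivative_mul]
    have h0 : derivative ((n:ℤ[X]) + 1) = 0 := by
      simp
    rw [h0, zero_mul, zero_add]
    push_cast
    linear_combination (-(n:ℤ[X]) - 1) * hermite_succ n

open Polynomial in
theorem mul_hermite_eval (n : ℕ) (x : ℝ) :
    x * aeval x (hermite n) =
      aeval x (hermite (n+1)) + n * aeval x (hermite (n-1)) := by
  cases n with
  | zero => simp [hermite_one, hermite_zero]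
  | succ n =>
    rw [hermite_succ (n+1), deriv_hermite]
    push_cast
    simp only [map_sub, map_mul, map_add, aeval_X, map_natCast, map_one]
    ring

open Polynomial in
theorem pow_eq_hermite_sum (k : ℕ) (x : ℝ) :
    x ^ k = ∑ j ∈ Finset.range (k+1), hcoef k j * aeval x (hermite (k - 2*j)) := by
  induction k with
  | zero => simp [hcoef, hermite_zero]
  | succ k ih =>
    have step : x ^ (k+1) = ∑ j ∈ Finset.range (k+1),
        (hcoef k j * aeval x (hermite (k + 1 - 2*j))
          + ((k - 2*j : ℕ) : ℝ) * hcoef k j * aeval x (hermite (k + 1 - 2*(j+1)))) := by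
      rw [pow_succ, ih, Finset.sum_mul]
      refine Finset.sum_congr rfl fun j hj => ?_
      rcases le_or_gt (2*j) k with h | h
      · have e1 : k - 2*j + 1 = k + 1 - 2*j := by omega
        have e2 : k - 2*j - 1 = k + 1 - 2*(j+1) := by omega
        rw [mul_assoc, mul_comm (aeval x (hermite (k - 2*j))) x, mul_hermite_eval, e1, e2]
        ring
      · rw [hcoef_big _ _ h, show k - 2*j = 0 by omega]
        simp
    rw [step, Finset.sum_add_distrib]
    -- second sum reindexed
    have S2 : ∑ j ∈ Finset.range (k+1),
        ((k - 2*j : ℕ) : ℝ) * hcoef k j * aeval x (hermite (k + 1 - 2*(j+1)))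
        = ∑ j ∈ Finset.range (k+1),
          (hcoef (k+1) (j+1) - hcoef k (j+1)) * aeval x (hermite (k + 1 - 2*(j+1))) := by
      refine Finset.sum_congr rfl fun j hj => ?_
      rw [hcoef_rec]
      ring
    rw [S2]
    have S1 : ∑ j ∈ Finset.range (k+1), hcoef k j * aeval x (hermite (k + 1 - 2*j))
        = ∑ j ∈ Finset.range (k+2), hcoef k j * aeval x (hermite (k + 1 - 2*j)) := by
      rw [Finset.sum_range_succ (fun j => hcoef k j * aeval x (hermite (k + 1 - 2*j))) (k+1),
        hcoef_big k (k+1) (by omega)]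
      simp
    rw [S1, Finset.sum_range_succ' (fun j => hcoef k j * aeval x (hermite (k + 1 - 2*j))) (k+1),
      Finset.sum_range_succ' (fun j => hcoef (k+1) j * aeval x (hermite (k + 1 - 2*j))) (k+1),
      hcoef_zero]
    rw [add_right_comm]
    congr 1
    rw [← Finset.sum_add_distrib]
    refine Finset.sum_congr rfl fun j hj => ?_
    ring

lemma fact_sub_le (n : ℕ) : ∀ m, m ≤ n → n.factorial ≤ (n - m).factorial * n ^ m := by
  intro m
  induction m with
  | zero => simp
  | succ m ih =>
    intro h
    have h1 := ih (by omega)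
    have h2 : (n - m).factorial ≤ (n - (m+1)).factorial * n := by
      have e : n - m = (n - (m+1)) + 1 := by omega
      rw [e, Nat.factorial_succ]
      have : n - (m+1) + 1 ≤ n := by omega
      calc (n - (m+1) + 1) * (n - (m+1)).factorial ≤ n * (n - (m+1)).factorial :=
            Nat.mul_le_mul_right _ this
        _ = (n - (m+1)).factorial * n := Nat.mul_comm _ _
    calc n.factorial ≤ (n - m).factorial * n ^ m := h1
      _ ≤ ((n - (m+1)).factorial * n) * n ^ m := Nat.mul_le_mul_right _ h2
      _ = (n - (m+1)).factorial * n ^ (m+1) := by ring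

lemma fact_two_mul_le : ∀ k : ℕ, (2*k).factorial ≤ 4^k * k.factorial^2 := by
  intro k
  induction k with
  | zero => simp
  | succ k ih =>
    have e : 2*(k+1) = (2*k+1)+1 := by ring
    rw [e, Nat.factorial_succ, Nat.factorial_succ]
    calc (2*k+1+1) * ((2*k+1) * (2*k).factorial)
        ≤ (2*k+2) * ((2*k+2) * (4^k * k.factorial^2)) := by
          exact Nat.mul_le_mul (by omega) (Nat.mul_le_mul (by omega) ih)
      _ = 4^(k+1) * ((k+1)*k.factorial)^2 := by ring

open MeasureTheory Polynomial in
lemma integrable_poly_eval {Ω : Type*} [MeasureSpace Ω]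
    [IsProbabilityMeasure (volume : Measure Ω)]
    (X : Ω → ℝ) (hX : Measurable X) (hmom : ∀ k : ℕ, Integrable (fun ω => |X ω| ^ k))
    (q : ℝ[X]) : Integrable (fun ω => q.eval (X ω)) := by
  have he : (fun ω => q.eval (X ω))
      = fun ω => ∑ i ∈ Finset.range (q.natDegree + 1), q.coeff i * X ω ^ i := by
    funext ω; exact q.eval_eq_sum_range (X ω)
  rw [he]
  apply integrable_finset_sum
  intro i _
  apply Integrable.const_mul
  refine (hmom i).mono' ((hX.pow_const i).aestronglyMeasurable) ?_
  filter_upwards with ω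
  rw [Real.norm_eq_abs, abs_pow]

open MeasureTheory Polynomial in
lemma integrable_hermite_eval {Ω : Type*} [MeasureSpace Ω]
    [IsProbabilityMeasure (volume : Measure Ω)]
    (X : Ω → ℝ) (hX : Measurable X) (hmom : ∀ k : ℕ, Integrable (fun ω => |X ω| ^ k))
    (n : ℕ) : Integrable (fun ω => (aeval (X ω) (hermite n) : ℝ)) := by
  have he : (fun ω => (aeval (X ω) (hermite n) : ℝ))
      = fun ω => ((hermite n).map (algebraMap ℤ ℝ)).eval (X ω) := by
    funext ω
    rw [aeval_def, eval_map]
  rw [he]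
  exact integrable_poly_eval X hX hmom _
open MeasureTheory

/-- If `X` has all moments finite and `Σ_k (E H_k(X))²/k!` converges with sum `C²`, then
`E X^{2k} ≤ C e^k ((2k)!)^{1/2}` for all `k`; in particular `E e^{cX²} < ∞` for some `c > 0`. -/
theorem moment_bound_of_normal_moments {Ω : Type*} [MeasureSpace Ω]
    [IsProbabilityMeasure (volume : Measure Ω)]
    (X : Ω → ℝ) (hX : Measurable X)
    (hmom : ∀ k : ℕ, Integrable (fun ω => |X ω| ^ k))
    (hsum : Summable (fun k : ℕ =>
      (∫ ω, (Polynomial.aeval (X ω) (Polynomial.hermite k) : ℝ)) ^ 2 / (k.factorial : ℝ))) :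
    (∀ k : ℕ, (∫ ω, X ω ^ (2 * k))
        ≤ Real.sqrt (∑' k : ℕ,
            (∫ ω, (Polynomial.aeval (X ω) (Polynomial.hermite k) : ℝ)) ^ 2 / (k.factorial : ℝ))
          * Real.exp k * Real.sqrt ((2 * k).factorial : ℝ)) ∧
    ∃ c : ℝ, 0 < c ∧ Integrable (fun ω => Real.exp (c * X ω ^ 2)) := by
  set m : ℕ → ℝ := fun n => ∫ ω, (Polynomial.aeval (X ω) (Polynomial.hermite n) : ℝ) with hm_def
  set C : ℝ := Real.sqrt (∑' k : ℕ, (m k) ^ 2 / (k.factorial : ℝ)) with hC_def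
  have htsum_nonneg : 0 ≤ ∑' k : ℕ, (m k) ^ 2 / (k.factorial : ℝ) :=
    tsum_nonneg fun k => by positivity
  have hC_nonneg : 0 ≤ C := Real.sqrt_nonneg _
  have hC_sq : C ^ 2 = ∑' k : ℕ, (m k) ^ 2 / (k.factorial : ℝ) := Real.sq_sqrt htsum_nonneg
  -- bound on |m n|
  have hm_bound : ∀ n : ℕ, |m n| ≤ C * Real.sqrt (n.factorial : ℝ) := by
    intro n
    have h1 : (m n) ^ 2 / (n.factorial : ℝ) ≤ C ^ 2 := by
      rw [hC_sq]
      exact Summable.le_tsum hsum n fun j _ => by positivity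
    have h2 : (m n) ^ 2 ≤ C ^ 2 * (n.factorial : ℝ) := by
      rw [div_le_iff₀ (by positivity)] at h1
      linarith
    calc |m n| = Real.sqrt ((m n) ^ 2) := (Real.sqrt_sq_eq_abs _).symm
      _ ≤ Real.sqrt (C ^ 2 * (n.factorial : ℝ)) := Real.sqrt_le_sqrt h2
      _ = C * Real.sqrt (n.factorial : ℝ) := by
          rw [Real.sqrt_mul (by positivity), Real.sqrt_sq hC_nonneg]
  have hX2k : ∀ k : ℕ, Integrable (fun ω => X ω ^ k) := by
    intro k
    refine (hmom k).mono' ((hX.pow_const k).aestronglyMeasurable) ?_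
    filter_upwards with ω
    rw [Real.norm_eq_abs, abs_pow]
  -- part 1
  have hpart1 : ∀ k : ℕ, (∫ ω, X ω ^ (2 * k))
      ≤ C * Real.exp k * Real.sqrt (((2 * k).factorial : ℝ)) := by
    intro k
    have heq : (∫ ω, X ω ^ (2 * k))
        = ∑ j ∈ Finset.range (2*k+1), hcoef (2*k) j * m (2*k - 2*j) := by
      calc (∫ ω, X ω ^ (2 * k))
          = ∫ ω, ∑ j ∈ Finset.range (2*k+1),
              hcoef (2*k) j * (Polynomial.aeval (X ω) (Polynomial.hermite (2*k - 2*j)) : ℝ) := by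
            congr 1; funext ω; exact pow_eq_hermite_sum (2*k) (X ω)
        _ = ∑ j ∈ Finset.range (2*k+1),
              ∫ ω, hcoef (2*k) j * (Polynomial.aeval (X ω) (Polynomial.hermite (2*k - 2*j)) : ℝ) :=
            integral_finset_sum _ (fun j _ =>
              (integrable_hermite_eval X hX hmom (2*k - 2*j)).const_mul _)
        _ = ∑ j ∈ Finset.range (2*k+1), hcoef (2*k) j * m (2*k - 2*j) := by
            refine Finset.sum_congr rfl fun j _ => ?_
            exact integral_const_mul _ _
    rw [heq]
    have hterm : ∀ j ∈ Finset.range (2*k+1),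
        hcoef (2*k) j * m (2*k - 2*j)
          ≤ C * Real.sqrt (((2*k).factorial : ℝ)) * ((k:ℝ)^j / (j.factorial : ℝ)) := by
      intro j _
      rcases le_or_gt (2*j) (2*k) with h | h
      · set n := 2*k - 2*j with hn_def
        have hmn : m n ≤ C * Real.sqrt (n.factorial : ℝ) := (abs_le.mp (hm_bound n)).2
        have step1 : hcoef (2*k) j * m n ≤ hcoef (2*k) j * (C * Real.sqrt (n.factorial : ℝ)) :=
          mul_le_mul_of_nonneg_left hmn (hcoef_nonneg _ _)
        refine step1.trans ?_
        rw [hcoef, if_pos h, ← hn_def]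
        -- sqrt comparison
        have hfact : ((2*k).factorial : ℝ) ≤ (n.factorial : ℝ) * ((2*(k:ℝ))^j)^2 := by
          have hnat := fact_sub_le (2*k) (2*j) h
          have : ((2*k).factorial : ℝ) ≤ (n.factorial : ℝ) * ((2*k : ℕ) : ℝ)^(2*j) := by
            exact_mod_cast hnat
          refine this.trans (le_of_eq ?_)
          push_cast
          rw [← pow_mul]
          ring_nf
        have h2 : Real.sqrt (((2*k).factorial : ℝ))
            ≤ Real.sqrt ((n.factorial : ℝ)) * (2*(k:ℝ))^j := by
          calc Real.sqrt (((2*k).factorial : ℝ))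
              ≤ Real.sqrt ((n.factorial : ℝ) * ((2*(k:ℝ))^j)^2) := Real.sqrt_le_sqrt hfact
            _ = Real.sqrt ((n.factorial : ℝ)) * (2*(k:ℝ))^j := by
                rw [Real.sqrt_mul (by positivity), Real.sqrt_sq (by positivity)]
        have e : ((2*k).factorial : ℝ) / ((n.factorial : ℝ) * (j.factorial : ℝ) * 2^j)
              * (C * Real.sqrt (n.factorial : ℝ))
            = C * (((2*k).factorial : ℝ)
              / (Real.sqrt (n.factorial : ℝ) * (j.factorial : ℝ) * 2^j)) := by
          have hss : Real.sqrt (n.factorial : ℝ) * Real.sqrt (n.factorial : ℝ)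
              = (n.factorial : ℝ) := Real.mul_self_sqrt (by positivity)
          have hs : (0:ℝ) < Real.sqrt (n.factorial : ℝ) := Real.sqrt_pos.mpr (by positivity)
          field_simp
          linear_combination C * hss
        rw [e]
        have e2 : C * Real.sqrt (((2*k).factorial : ℝ)) * ((k:ℝ)^j / (j.factorial : ℝ))
            = C * (Real.sqrt (((2*k).factorial : ℝ)) * (k:ℝ)^j / (j.factorial : ℝ)) := by ring
        rw [e2]
        refine mul_le_mul_of_nonneg_left ?_ hC_nonneg
        rw [div_le_div_iff₀ (by positivity) (by positivity)]
        calc ((2*k).factorial : ℝ) * (j.factorial : ℝ)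
            = Real.sqrt (((2*k).factorial : ℝ)) * Real.sqrt (((2*k).factorial : ℝ))
              * (j.factorial : ℝ) := by
              rw [Real.mul_self_sqrt (by positivity : (0:ℝ) ≤ ((2*k).factorial : ℝ))]
          _ ≤ Real.sqrt (((2*k).factorial : ℝ)) * (Real.sqrt ((n.factorial : ℝ)) * (2*(k:ℝ))^j)
              * (j.factorial : ℝ) := by
              have := mul_le_mul_of_nonneg_left h2 (Real.sqrt_nonneg (((2*k).factorial : ℝ)))
              exact mul_le_mul_of_nonneg_right this (by positivity)
          _ = Real.sqrt (((2*k).factorial : ℝ)) * (k:ℝ)^j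
              * (Real.sqrt ((n.factorial : ℝ)) * (j.factorial : ℝ) * 2^j) := by ring
      · rw [hcoef_big _ _ h]
        have : (0:ℝ) ≤ C * Real.sqrt (((2*k).factorial : ℝ)) * ((k:ℝ)^j / (j.factorial : ℝ)) := by
          positivity
        simpa using this
    calc ∑ j ∈ Finset.range (2*k+1), hcoef (2*k) j * m (2*k - 2*j)
        ≤ ∑ j ∈ Finset.range (2*k+1),
            C * Real.sqrt (((2*k).factorial : ℝ)) * ((k:ℝ)^j / (j.factorial : ℝ)) :=
          Finset.sum_le_sum hterm
      _ = C * Real.sqrt (((2*k).factorial : ℝ))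
            * ∑ j ∈ Finset.range (2*k+1), ((k:ℝ)^j / (j.factorial : ℝ)) := by
          rw [Finset.mul_sum]
      _ ≤ C * Real.sqrt (((2*k).factorial : ℝ)) * Real.exp k := by
          refine mul_le_mul_of_nonneg_left ?_ (by positivity)
          exact Real.sum_le_exp_of_nonneg (by positivity) _
      _ = C * Real.exp k * Real.sqrt (((2*k).factorial : ℝ)) := by ring
  refine ⟨hpart1, ?_⟩
  -- part 2
  set c : ℝ := (4 * Real.exp 1)⁻¹ with hc_def
  have hc_pos : 0 < c := by positivity
  refine ⟨c, hc_pos, ?_⟩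
  -- moment bound without sqrt
  have hmom2 : ∀ k : ℕ, (∫ ω, X ω ^ (2*k))
      ≤ C * (2 * Real.exp 1)^k * (k.factorial : ℝ) := by
    intro k
    refine (hpart1 k).trans ?_
    have h1 : Real.sqrt (((2*k).factorial : ℝ)) ≤ 2^k * (k.factorial : ℝ) := by
      have hnat := fact_two_mul_le k
      have h2 : ((2*k).factorial : ℝ) ≤ (2^k * (k.factorial : ℝ))^2 := by
        have : ((2*k).factorial : ℝ) ≤ ((4:ℝ))^k * ((k.factorial : ℝ))^2 := by exact_mod_cast hnat
        refine this.trans (le_of_eq ?_)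
        rw [show ((4:ℝ)) = 2^2 by norm_num, ← pow_mul, mul_pow, ← pow_mul]
        ring_nf
      calc Real.sqrt (((2*k).factorial : ℝ)) ≤ Real.sqrt ((2^k * (k.factorial : ℝ))^2) :=
            Real.sqrt_le_sqrt h2
        _ = 2^k * (k.factorial : ℝ) := Real.sqrt_sq (by positivity)
    have h3 : Real.exp (k:ℝ) = (Real.exp 1)^k := by
      rw [← Real.exp_nat_mul]; norm_num
    calc C * Real.exp k * Real.sqrt (((2*k).factorial : ℝ))
        ≤ C * Real.exp k * (2^k * (k.factorial : ℝ)) := by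
          refine mul_le_mul_of_nonneg_left h1 ?_
          have := Real.exp_pos (k:ℝ)
          positivity
      _ = C * (2 * Real.exp 1)^k * (k.factorial : ℝ) := by
          rw [h3, mul_pow]; ring
  -- the series terms
  have hg_int : ∀ k : ℕ, Integrable (fun ω => (c * X ω ^ 2)^k / (k.factorial : ℝ)) := by
    intro k
    have e : (fun ω => (c * X ω ^ 2)^k / (k.factorial : ℝ))
        = fun ω => (c^k / (k.factorial : ℝ)) * X ω ^ (2*k) := by
      funext ω
      rw [mul_pow, pow_mul]
      ring
    rw [e]
    exact (hX2k (2*k)).const_mul _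
  have hg_integral : ∀ k : ℕ, (∫ ω, (c * X ω ^ 2)^k / (k.factorial : ℝ)) ≤ C * (1/2)^k := by
    intro k
    have e : (∫ ω, (c * X ω ^ 2)^k / (k.factorial : ℝ))
        = (c^k / (k.factorial : ℝ)) * ∫ ω, X ω ^ (2*k) := by
      rw [← integral_const_mul]
      congr 1; funext ω
      rw [mul_pow, pow_mul]
      ring
    rw [e]
    have hfac_pos : (0:ℝ) < (k.factorial : ℝ) := by positivity
    have hce : c * (2 * Real.exp 1) = 1/2 := by
      rw [hc_def]
      have he := (Real.exp_pos 1).ne'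
      field_simp
      ring
    calc (c^k / (k.factorial : ℝ)) * ∫ ω, X ω ^ (2*k)
        ≤ (c^k / (k.factorial : ℝ)) * (C * (2 * Real.exp 1)^k * (k.factorial : ℝ)) := by
          refine mul_le_mul_of_nonneg_left (hmom2 k) (by positivity)
      _ = C * (c * (2 * Real.exp 1))^k := by
          calc (c^k / (k.factorial : ℝ)) * (C * (2 * Real.exp 1)^k * (k.factorial : ℝ))
              = C * (c^k * (2 * Real.exp 1)^k) * ((k.factorial : ℝ) / (k.factorial : ℝ)) := by
                ring
            _ = C * (c * (2 * Real.exp 1))^k := by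
                rw [div_self hfac_pos.ne', mul_one, mul_pow, mul_pow, mul_pow]
      _ = C * (1/2)^k := by rw [hce]
  -- integrability via lintegral
  have hmeas : Measurable fun ω => Real.exp (c * X ω ^ 2) := by
    exact (Real.measurable_exp.comp ((hX.pow_const 2).const_mul c))
  have hexp_eq : ∀ ω, Real.exp (c * X ω ^ 2)
      = ∑' k : ℕ, (c * X ω ^ 2)^k / (k.factorial : ℝ) := by
    intro ω
    rw [Real.exp_eq_exp_ℝ, NormedSpace.exp_eq_tsum_div]
  have hfin : (∫⁻ ω, ENNReal.ofReal (Real.exp (c * X ω ^ 2))) < ⊤ := by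
    have e1 : (∫⁻ ω, ENNReal.ofReal (Real.exp (c * X ω ^ 2)))
        = ∑' k : ℕ, ∫⁻ ω, ENNReal.ofReal ((c * X ω ^ 2)^k / (k.factorial : ℝ)) := by
      rw [← MeasureTheory.lintegral_tsum]
      · congr 1; funext ω
        rw [hexp_eq ω, ENNReal.ofReal_tsum_of_nonneg]
        · intro k; positivity
        · exact Real.summable_pow_div_factorial _
      · intro k
        refine ENNReal.measurable_ofReal.comp ?_ |>.aemeasurable
        exact (((hX.pow_const 2).const_mul c).pow_const k).div_const _
    rw [e1]
    have e2 : ∀ k : ℕ, (∫⁻ ω, ENNReal.ofReal ((c * X ω ^ 2)^k / (k.factorial : ℝ)))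
        = ENNReal.ofReal (∫ ω, (c * X ω ^ 2)^k / (k.factorial : ℝ)) := by
      intro k
      rw [← MeasureTheory.ofReal_integral_eq_lintegral_ofReal (hg_int k)]
      filter_upwards with ω
      positivity
    calc (∑' k : ℕ, ∫⁻ ω, ENNReal.ofReal ((c * X ω ^ 2)^k / (k.factorial : ℝ)))
        = ∑' k : ℕ, ENNReal.ofReal (∫ ω, (c * X ω ^ 2)^k / (k.factorial : ℝ)) := by
          exact tsum_congr e2
      _ ≤ ∑' k : ℕ, ENNReal.ofReal (C * (1/2)^k) :=
          ENNReal.tsum_le_tsum fun k => ENNReal.ofReal_le_ofReal (hg_integral k)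
      _ = ENNReal.ofReal (∑' k : ℕ, C * (1/2)^k) := by
          rw [ENNReal.ofReal_tsum_of_nonneg]
          · intro k; positivity
          · exact (summable_geometric_of_lt_one (by norm_num) (by norm_num)).mul_left C
      _ < ⊤ := ENNReal.ofReal_lt_top
  refine ⟨hmeas.aestronglyMeasurable, ?_⟩
  rw [hasFiniteIntegral_iff_ofReal]
  · exact hfin
  · filter_upwards with ω
    exact (Real.exp_pos _).le
end

section
/- Let X, Y be independent random variables with finite χ² distance to Z ~ N(0,1), and a, b real with a² + b² = 1. Then 1 + χ²(aX + bY, Z) ≤ (1 + χ²(X,Z)) (1 + χ²(Y,Z)). -/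
open MeasureTheory ProbabilityTheory Classical
open scoped ENNReal

/-- `1 + χ²(ν, N(0,1))`, as a value in `[0,∞]`: equal to `∫ (dν/dγ)² dγ` when
`ν ≪ γ = N(0,1)`, and `∞` otherwise (in particular when `ν` has no density). -/

noncomputable def onePlusChiSq (ν : Measure ℝ) : ℝ≥0∞ :=
  if ν ≪ gaussianReal 0 1 then
    ∫⁻ x, (ν.rnDeriv (gaussianReal 0 1) x) ^ 2 ∂(gaussianReal 0 1)
  else ⊤

section ChiSqAux

open Real

variable {a b : ℝ}

/-- Jensen / Cauchy-Schwarz for probability measures. -/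
lemma sq_lintegral_le_aux {α : Type*} [MeasurableSpace α] (μ : Measure α)
    [IsProbabilityMeasure μ] {f : α → ℝ≥0∞} (hf : AEMeasurable f μ) :
    (∫⁻ x, f x ∂μ) ^ 2 ≤ ∫⁻ x, (f x) ^ 2 ∂μ := by
  have hpq : Real.HolderConjugate 2 2 := Real.HolderConjugate.two_two
  have h := ENNReal.lintegral_mul_le_Lp_mul_Lq μ hpq hf (aemeasurable_const (b := (1:ℝ≥0∞)))
  simp only [Pi.mul_apply, Pi.one_apply, mul_one, ENNReal.one_rpow, lintegral_one,
    measure_univ, one_mul] at h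
  have h2 : ∀ x : ℝ≥0∞, x ^ (2:ℝ) = x ^ (2:ℕ) := fun x => by
    rw [← ENNReal.rpow_natCast x 2]; norm_num
  simp only [h2] at h
  calc (∫⁻ x, f x ∂μ) ^ 2 ≤ ((∫⁻ x, f x ^ 2 ∂μ) ^ ((1:ℝ)/2)) ^ 2 :=
        pow_le_pow_left₀ (zero_le) h 2
    _ = ∫⁻ x, f x ^ 2 ∂μ := by
        rw [← ENNReal.rpow_natCast (_ ^ ((1:ℝ)/2)) 2, ← ENNReal.rpow_mul]
        norm_num

lemma prod_withDensity_aux {μ ν : Measure ℝ} [SigmaFinite μ] [SigmaFinite ν]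
    {f g : ℝ → ℝ≥0∞} (hf : Measurable f) (hg : Measurable g)
    [SigmaFinite (μ.withDensity f)] [SigmaFinite (ν.withDensity g)] :
    (μ.withDensity f).prod (ν.withDensity g)
      = (μ.prod ν).withDensity (fun p => f p.1 * g p.2) := by
  refine Measure.prod_eq fun s t hs ht => ?_
  rw [withDensity_apply _ (hs.prod ht), ← Measure.prod_restrict,
    lintegral_prod_mul hf.aemeasurable hg.aemeasurable,
    ← withDensity_apply _ hs, ← withDensity_apply _ ht]

lemma map_withDensity_equiv_aux {α β : Type*} [MeasurableSpace α] [MeasurableSpace β]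
    (e : α ≃ᵐ β) (μ : Measure α) {ρ : β → ℝ≥0∞} (hρ : Measurable ρ) :
    (μ.withDensity (ρ ∘ e)).map e = (μ.map e).withDensity ρ := by
  ext s hs
  rw [Measure.map_apply e.measurable hs, withDensity_apply _ hs,
    withDensity_apply _ (e.measurable hs), setLIntegral_map hs hρ e.measurable]
  rfl

lemma map_fst_withDensity_aux (μ ν : Measure ℝ) [SFinite μ] [SFinite ν]
    {h : ℝ × ℝ → ℝ≥0∞} (hh : Measurable h) :
    ((μ.prod ν).withDensity h).map Prod.fst
      = μ.withDensity (fun u => ∫⁻ v, h (u, v) ∂ν) := by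
  ext s hs
  rw [Measure.map_apply measurable_fst hs, withDensity_apply _ (measurable_fst hs),
    withDensity_apply _ hs]
  have hps : Prod.fst ⁻¹' s = s ×ˢ (Set.univ : Set ℝ) := by ext p; simp
  rw [hps, ← Measure.prod_restrict, lintegral_prod _ hh.aemeasurable,
    Measure.restrict_univ]

/-- The rotation-reflection `(x,y) ↦ (ax+by, bx-ay)`, an involutive measurable equiv. -/
noncomputable def rotEquiv (a b : ℝ) (hab : a ^ 2 + b ^ 2 = 1) : (ℝ × ℝ) ≃ᵐ (ℝ × ℝ) where
  toFun p := (a * p.1 + b * p.2, b * p.1 - a * p.2)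
  invFun p := (a * p.1 + b * p.2, b * p.1 - a * p.2)
  left_inv p := by
    ext <;> simp only
    · linear_combination p.1 * hab
    · linear_combination p.2 * hab
  right_inv p := by
    ext <;> simp only
    · linear_combination p.1 * hab
    · linear_combination p.2 * hab
  measurable_toFun := by
    apply Measurable.prod <;> fun_prop
  measurable_invFun := by
    apply Measurable.prod <;> fun_prop

lemma rotEquiv_coe (hab : a ^ 2 + b ^ 2 = 1) :
    ⇑(rotEquiv a b hab) = fun p : ℝ × ℝ => (a * p.1 + b * p.2, b * p.1 - a * p.2) := rfl

lemma rot_involutive (hab : a ^ 2 + b ^ 2 = 1) (p : ℝ × ℝ) :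
    rotEquiv a b hab (rotEquiv a b hab p) = p := (rotEquiv a b hab).left_inv p

lemma rot_map_volume (hab : a ^ 2 + b ^ 2 = 1) :
    (volume : Measure (ℝ × ℝ)).map (rotEquiv a b hab) = volume := by
  have hL : (Matrix.toLin (Module.Basis.finTwoProd ℝ) (Module.Basis.finTwoProd ℝ) !![a, b; b, -a]
        : (ℝ × ℝ) →ₗ[ℝ] ℝ × ℝ)
      = fun p : ℝ × ℝ => (a * p.1 + b * p.2, b * p.1 - a * p.2) := by
    funext p
    rw [Matrix.toLin_finTwoProd_apply]
    ring_nf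
  have hdet : LinearMap.det
      (Matrix.toLin (Module.Basis.finTwoProd ℝ) (Module.Basis.finTwoProd ℝ) !![a, b; b, -a]) = -1 := by
    rw [LinearMap.det_toLin, Matrix.det_fin_two_of]
    nlinarith
  have := Measure.map_linearMap_addHaar_eq_smul_addHaar (volume : Measure (ℝ × ℝ))
    (f := Matrix.toLin (Module.Basis.finTwoProd ℝ) (Module.Basis.finTwoProd ℝ) !![a, b; b, -a])
    (by rw [hdet]; norm_num)
  rw [hdet] at this
  rw [rotEquiv_coe, ← hL, this]
  norm_num

noncomputable def stdG : Measure ℝ := gaussianReal 0 1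

lemma stdG_def : stdG = gaussianReal 0 1 := rfl

instance : IsProbabilityMeasure stdG :=
  inferInstanceAs (IsProbabilityMeasure (gaussianReal 0 1))

noncomputable def gpdf2 : ℝ × ℝ → ℝ≥0∞ := fun p => gaussianPDF 0 1 p.1 * gaussianPDF 0 1 p.2

lemma gpdf2_meas : Measurable gpdf2 :=
  ((measurable_gaussianPDF 0 1).comp measurable_fst).mul
    ((measurable_gaussianPDF 0 1).comp measurable_snd)

instance : SigmaFinite (volume.withDensity (gaussianPDF 0 1)) := by
  rw [← gaussianReal_of_var_ne_zero 0 one_ne_zero]; infer_instance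

lemma stdG_prod : stdG.prod stdG = (volume : Measure (ℝ × ℝ)).withDensity gpdf2 := by
  rw [stdG, gaussianReal_of_var_ne_zero 0 one_ne_zero, prod_withDensity_aux
    (measurable_gaussianPDF 0 1) (measurable_gaussianPDF 0 1), ← Measure.volume_eq_prod]
  rfl

lemma gpdf2_rot (hab : a ^ 2 + b ^ 2 = 1) (p : ℝ × ℝ) :
    gpdf2 (rotEquiv a b hab p) = gpdf2 p := by
  have key : ∀ x y : ℝ, gaussianPDF 0 1 x * gaussianPDF 0 1 y
      = ENNReal.ofReal ((Real.sqrt (2 * π))⁻¹ ^ 2 * Real.exp (-(x ^ 2 + y ^ 2) / 2)) := by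
    intro x y
    rw [gaussianPDF, gaussianPDF, ← ENNReal.ofReal_mul (gaussianPDFReal_nonneg _ _ _)]
    congr 1
    simp only [gaussianPDFReal, NNReal.coe_one, mul_one, sub_zero]
    rw [mul_mul_mul_comm, ← Real.exp_add, ← sq]
    ring_nf
  simp only [gpdf2, rotEquiv_coe, key]
  congr 3
  ring_nf
  nlinarith [sq_nonneg p.1, sq_nonneg p.2]

lemma rot_map_stdG_prod (hab : a ^ 2 + b ^ 2 = 1) :
    (stdG.prod stdG).map (rotEquiv a b hab) = stdG.prod stdG := by
  have : gpdf2 = gpdf2 ∘ (rotEquiv a b hab) := by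
    funext p; exact (gpdf2_rot hab p).symm
  rw [stdG_prod]
  conv_lhs => rw [this]
  rw [map_withDensity_equiv_aux _ _ gpdf2_meas, rot_map_volume hab]

end ChiSqAux

/-- For independent `X, Y` with finite χ²-distance to `Z ~ N(0,1)` and `a² + b² = 1`:
`1 + χ²(aX + bY, Z) ≤ (1 + χ²(X,Z)) (1 + χ²(Y,Z))`. -/
theorem chiSq_submultiplicative {Ω : Type*} [MeasureSpace Ω]
    [IsProbabilityMeasure (volume : Measure Ω)]
    (X Y : Ω → ℝ) (hX : Measurable X) (hY : Measurable Y)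
    (hindep : IndepFun X Y)
    (hXfin : onePlusChiSq (Measure.map X volume) ≠ ⊤)
    (hYfin : onePlusChiSq (Measure.map Y volume) ≠ ⊤)
    (a b : ℝ) (hab : a ^ 2 + b ^ 2 = 1) :
    onePlusChiSq (Measure.map (fun ω => a * X ω + b * Y ω) volume)
      ≤ onePlusChiSq (Measure.map X volume) * onePlusChiSq (Measure.map Y volume) := by
  set μX := Measure.map X volume with hμX
  set μY := Measure.map Y volume with hμY
  haveI : IsProbabilityMeasure μX := Measure.isProbabilityMeasure_map hX.aemeasurable
  haveI : IsProbabilityMeasure μY := Measure.isProbabilityMeasure_map hY.aemeasurable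
  have hXac : μX ≪ stdG := by
    by_contra h
    rw [onePlusChiSq, ← stdG_def, if_neg h] at hXfin
    exact hXfin rfl
  have hYac : μY ≪ stdG := by
    by_contra h
    rw [onePlusChiSq, ← stdG_def, if_neg h] at hYfin
    exact hYfin rfl
  set f := μX.rnDeriv stdG with hf
  set g := μY.rnDeriv stdG with hg
  have hfm : Measurable f := Measure.measurable_rnDeriv _ _
  have hgm : Measurable g := Measure.measurable_rnDeriv _ _
  have hfX : stdG.withDensity f = μX := Measure.withDensity_rnDeriv_eq _ _ hXac
  have hgY : stdG.withDensity g = μY := Measure.withDensity_rnDeriv_eq _ _ hYac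
  -- the joint law
  have hjoint : volume.map (fun ω => (X ω, Y ω)) = μX.prod μY :=
    (indepFun_iff_map_prod_eq_prod_map_map hX.aemeasurable hY.aemeasurable).mp hindep
  -- density of the rotated joint law
  set T := rotEquiv a b hab with hT
  set ρ : ℝ × ℝ → ℝ≥0∞ :=
    fun p => f (a * p.1 + b * p.2) * g (b * p.1 - a * p.2) with hρdef
  have hρ : Measurable ρ := by
    apply Measurable.mul <;> apply Measurable.comp (by assumption) <;> fun_prop
  have hρT : ρ = (fun p : ℝ × ℝ => f p.1 * g p.2) ∘ T := rfl
  have hfg_rot : (fun p : ℝ × ℝ => f p.1 * g p.2) = ρ ∘ T := by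
    funext p
    have h2 := rot_involutive hab p
    calc f p.1 * g p.2
        = f ((T (T p)).1) * g ((T (T p)).2) := by rw [h2]
      _ = (ρ ∘ T) p := rfl
  have step1 : μX.prod μY = (stdG.prod stdG).withDensity (fun p => f p.1 * g p.2) := by
    haveI : SigmaFinite (stdG.withDensity f) := by rw [hfX]; infer_instance
    haveI : SigmaFinite (stdG.withDensity g) := by rw [hgY]; infer_instance
    rw [← hfX, ← hgY, prod_withDensity_aux hfm hgm]
  have step2 : (μX.prod μY).map T = (stdG.prod stdG).withDensity ρ := by
    rw [step1, hfg_rot, map_withDensity_equiv_aux _ _ hρ, rot_map_stdG_prod hab]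
  set k : ℝ → ℝ≥0∞ := fun u => ∫⁻ v, ρ (u, v) ∂stdG with hk
  have hkm : Measurable k := hρ.lintegral_prod_right'
  -- the law of aX + bY
  have step3 : Measure.map (fun ω => a * X ω + b * Y ω) volume = stdG.withDensity k := by
    have hcomp : (fun ω => a * X ω + b * Y ω)
        = (Prod.fst ∘ T) ∘ (fun ω => (X ω, Y ω)) := rfl
    rw [hcomp, ← Measure.map_map (measurable_fst.comp T.measurable) (hX.prodMk hY), hjoint,
      ← Measure.map_map measurable_fst T.measurable, step2,
      map_fst_withDensity_aux _ _ hρ]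
  -- compute the three `onePlusChiSq` values
  rw [step3, onePlusChiSq, ← stdG_def, if_pos (withDensity_absolutelyContinuous _ _)]
  rw [onePlusChiSq, ← stdG_def, if_pos hXac, onePlusChiSq, ← stdG_def, if_pos hYac]
  have hrn : (stdG.withDensity k).rnDeriv stdG =ᵐ[stdG] k :=
    Measure.rnDeriv_withDensity stdG hkm
  have hlhs : ∫⁻ x, ((stdG.withDensity k).rnDeriv stdG x) ^ 2 ∂stdG
      = ∫⁻ x, (k x) ^ 2 ∂stdG := by
    refine lintegral_congr_ae ?_
    filter_upwards [hrn] with x hx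
    rw [hx]
  rw [hlhs]
  -- the key chain of (in)equalities
  calc ∫⁻ x, (k x) ^ 2 ∂stdG
      ≤ ∫⁻ u, ∫⁻ v, (ρ (u, v)) ^ 2 ∂stdG ∂stdG := by
        refine lintegral_mono fun u => ?_
        exact sq_lintegral_le_aux stdG
          ((hρ.comp (measurable_prodMk_left : Measurable fun v : ℝ => (u, v))).aemeasurable)
    _ = ∫⁻ p, (ρ p) ^ 2 ∂(stdG.prod stdG) :=
        (lintegral_prod _ (hρ.pow_const 2).aemeasurable).symm
    _ = ∫⁻ p, ((fun q : ℝ × ℝ => (f q.1) ^ 2 * (g q.2) ^ 2) ∘ T) p ∂(stdG.prod stdG) := by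
        refine lintegral_congr fun p => ?_
        simp only [Function.comp_apply, hρdef]
        rw [mul_pow]
        rfl
    _ = ∫⁻ q, (f q.1) ^ 2 * (g q.2) ^ 2 ∂(stdG.prod stdG) := by
        have hF : Measurable fun q : ℝ × ℝ => (f q.1) ^ 2 * (g q.2) ^ 2 :=
          ((hfm.comp measurable_fst).pow_const 2).mul ((hgm.comp measurable_snd).pow_const 2)
        conv_rhs => rw [← rot_map_stdG_prod hab]
        exact (lintegral_map hF T.measurable).symm
    _ = (∫⁻ x, (f x) ^ 2 ∂stdG) * ∫⁻ x, (g x) ^ 2 ∂stdG :=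
        lintegral_prod_mul (hfm.pow_const 2).aemeasurable (hgm.pow_const 2).aemeasurable
end

section
/- Let X, Y be independent random variables, X with density p, and a, b real with a² + b² = 1, a ≠ 0. Then 1 + χ²(aX + bY, Z) ≤ |a|^{-1} (1 + χ²(X,Z)) E e^{Y²/2}, where Z ~ N(0,1). -/
open MeasureTheory ProbabilityTheory Classical
open scoped ENNReal

lemma aux_change_var {c : ℝ} (hc : c ≠ 0) (d : ℝ) (f : ℝ → ℝ≥0∞) (hf : Measurable f) :
    ∫⁻ t, f ((t - d) / c) = ENNReal.ofReal |c| * ∫⁻ x, f x := by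
  have h1 : ∫⁻ t, f ((t - d) / c) = ∫⁻ t, f (t / c) := by
    simpa using lintegral_sub_right_eq_self (fun t => f (t / c)) d
  rw [h1]
  have h2 : ∀ t : ℝ, t / c = c⁻¹ * t := fun t => by ring
  simp_rw [h2]
  have hmap := Real.map_volume_mul_left (inv_ne_zero hc)
  rw [← lintegral_map hf (measurable_const_mul c⁻¹)]
  rw [hmap, inv_inv, lintegral_smul_measure, smul_eq_mul]

lemma gauss_bound {a b : ℝ} (hab : a ^ 2 + b ^ 2 = 1) (ha : a ≠ 0) (t y : ℝ) :
    gaussianPDF 0 1 ((t - b * y) / a)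
      ≤ gaussianPDF 0 1 t * ENNReal.ofReal (Real.exp (y ^ 2 / 2)) := by
  rw [gaussianPDF, gaussianPDF, ← ENNReal.ofReal_mul (gaussianPDFReal_nonneg _ _ _)]
  refine ENNReal.ofReal_le_ofReal ?_
  simp only [gaussianPDFReal, NNReal.coe_one, mul_one, sub_zero]
  rw [mul_assoc, ← Real.exp_add]
  refine mul_le_mul_of_nonneg_left (Real.exp_le_exp.2 ?_) (by positivity)
  have hu : a * ((t - b * y) / a) = t - b * y := by field_simp
  set u := (t - b * y) / a with hu'
  have h1 : a ^ 2 * u ^ 2 = (t - b * y) ^ 2 := by rw [← mul_pow, hu]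
  have h2 : t ^ 2 - y ^ 2 ≤ u ^ 2 := by
    have h3 : (b * t - y) ^ 2 ≥ 0 := sq_nonneg _
    have ha2 : 0 < a ^ 2 := by positivity
    nlinarith
  nlinarith

lemma enn_aux {w q : ℝ≥0∞} (h0 : w ≠ 0) (ht : w ≠ ⊤) : w * (q / w) ^ 2 = q ^ 2 / w := by
  rw [div_eq_mul_inv, mul_pow, div_eq_mul_inv, sq (w⁻¹)]
  calc w * (q ^ 2 * (w⁻¹ * w⁻¹)) = (w * w⁻¹) * (q ^ 2 * w⁻¹) := by ring
  _ = q ^ 2 * w⁻¹ := by rw [ENNReal.mul_inv_cancel h0 ht, one_mul]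

lemma rpow_half_sq (x : ℝ≥0∞) : (x ^ (1/2 : ℝ)) ^ 2 = x := by
  rw [← ENNReal.rpow_natCast (x ^ (1/2:ℝ)) 2, ← ENNReal.rpow_mul]
  norm_num

lemma lintegral_sq_le {ν : Measure ℝ} (f w : ℝ → ℝ≥0∞) (hf : AEMeasurable f ν)
    (hw : AEMeasurable w ν) (hw0 : ∀ y, w y ≠ 0) (hwt : ∀ y, w y ≠ ⊤) :
    (∫⁻ y, f y ∂ν) ^ 2 ≤ (∫⁻ y, f y ^ 2 / w y ∂ν) * ∫⁻ y, w y ∂ν := by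
  set g : ℝ → ℝ≥0∞ := fun y => (w y) ^ (1/2 : ℝ) with hg
  set h : ℝ → ℝ≥0∞ := fun y => f y / g y with hh
  have hg0 : ∀ y, g y ≠ 0 := fun y => by
    simp [hg, ENNReal.rpow_eq_zero_iff, hw0 y, hwt y]
  have hgt : ∀ y, g y ≠ ⊤ := fun y => by
    simp [hg, ENNReal.rpow_eq_top_iff, hw0 y, hwt y]
  have hgsq : ∀ y, g y ^ 2 = w y := fun y => rpow_half_sq (w y)
  have hfeq : ∀ y, f y = h y * g y := fun y => by
    simp only [hh]
    rw [div_eq_mul_inv, mul_assoc, ENNReal.inv_mul_cancel (hg0 y) (hgt y), mul_one]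
  have hhsq : ∀ y, h y ^ 2 = f y ^ 2 / w y := fun y => by
    simp only [hh]
    rw [div_eq_mul_inv, mul_pow, ← ENNReal.inv_pow, hgsq y, ← div_eq_mul_inv]
  have hgm : AEMeasurable g ν := hw.pow_const _
  have hhm : AEMeasurable h ν := hf.div hgm
  have hpq : Real.HolderConjugate 2 2 := ⟨by norm_num, by norm_num, by norm_num⟩
  have hCS := ENNReal.lintegral_mul_le_Lp_mul_Lq ν hpq hhm hgm
  simp only [Pi.mul_apply] at hCS
  have h1 : ∫⁻ y, f y ∂ν = ∫⁻ y, h y * g y ∂ν := lintegral_congr fun y => hfeq y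
  have h2 : ∀ (u : ℝ → ℝ≥0∞), ∫⁻ y, u y ^ (2:ℝ) ∂ν = ∫⁻ y, u y ^ 2 ∂ν := fun u =>
    lintegral_congr fun y => by rw [← ENNReal.rpow_natCast (u y) 2]; norm_num
  rw [h2, h2] at hCS
  calc (∫⁻ y, f y ∂ν) ^ 2 = (∫⁻ y, h y * g y ∂ν) ^ 2 := by rw [h1]
  _ ≤ ((∫⁻ y, h y ^ 2 ∂ν) ^ (1/2:ℝ) * (∫⁻ y, g y ^ 2 ∂ν) ^ (1/2:ℝ)) ^ 2 := by
      exact pow_le_pow_left' hCS 2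
  _ = (∫⁻ y, h y ^ 2 ∂ν) * (∫⁻ y, g y ^ 2 ∂ν) := by
      rw [mul_pow, rpow_half_sq, rpow_half_sq]
  _ = (∫⁻ y, f y ^ 2 / w y ∂ν) * ∫⁻ y, w y ∂ν := by
      congr 1
      · exact lintegral_congr fun y => hhsq y
      · exact lintegral_congr fun y => hgsq y

lemma onePlusChiSq_withDensity (q : ℝ → ℝ≥0∞) (hq : Measurable q) :
    onePlusChiSq (volume.withDensity q) = ∫⁻ x, q x ^ 2 / gaussianPDF 0 1 x := by
  set φ : ℝ → ℝ≥0∞ := gaussianPDF 0 1 with hφ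
  have hφm : Measurable φ := measurable_gaussianPDF 0 1
  have hφ0 : ∀ x, φ x ≠ 0 := fun x => (gaussianPDF_pos 0 one_ne_zero x).ne'
  have hφt : ∀ x, φ x ≠ ⊤ := fun x => ENNReal.ofReal_ne_top
  have hγ : gaussianReal 0 1 = volume.withDensity φ := gaussianReal_of_var_ne_zero 0 one_ne_zero
  have hac : volume.withDensity q ≪ gaussianReal 0 1 :=
    (withDensity_absolutelyContinuous _ _).trans (gaussianReal_absolutelyContinuous' 0 one_ne_zero)
  have hkey : volume.withDensity q = (gaussianReal 0 1).withDensity (fun x => q x / φ x) := by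
    rw [hγ, ← withDensity_mul _ hφm (show Measurable (fun x => q x / φ x) from hq.div hφm)]
    congr 1
    ext x
    simp only [Pi.mul_apply]
    rw [ENNReal.mul_div_cancel' (fun h => absurd h (hφ0 x)) (fun h => absurd h (hφt x))]
  have hrn : (volume.withDensity q).rnDeriv (gaussianReal 0 1) =ᵐ[gaussianReal 0 1]
      fun x => q x / φ x := by
    rw [hkey]
    exact Measure.rnDeriv_withDensity _ (hq.div hφm)
  rw [onePlusChiSq, if_pos hac]
  calc ∫⁻ x, ((volume.withDensity q).rnDeriv (gaussianReal 0 1) x) ^ 2 ∂(gaussianReal 0 1)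
      = ∫⁻ x, (q x / φ x) ^ 2 ∂(gaussianReal 0 1) :=
        lintegral_congr_ae (hrn.mono fun x hx => by simp only []; rw [hx])
    _ = ∫⁻ x, φ x * (q x / φ x) ^ 2 := by
        rw [hγ, lintegral_withDensity_eq_lintegral_mul _ hφm ((show Measurable (fun x => q x / φ x) from hq.div hφm).pow_const 2)]
        rfl
    _ = ∫⁻ x, q x ^ 2 / φ x := lintegral_congr fun x => enn_aux (hφ0 x) (hφt x)

lemma map_comb_withDensity {Ω : Type*} [MeasureSpace Ω]
    [IsProbabilityMeasure (volume : Measure Ω)]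
    (X Y : Ω → ℝ) (hX : Measurable X) (hY : Measurable Y)
    (hindep : IndepFun X Y)
    (hXac : Measure.map X volume ≪ (volume : Measure ℝ))
    (a b : ℝ) (ha : a ≠ 0) :
    Measure.map (fun ω => a * X ω + b * Y ω) volume
      = volume.withDensity (fun t => ∫⁻ y, ENNReal.ofReal |a|⁻¹ *
          (Measure.map X volume).rnDeriv volume ((t - b * y) / a) ∂(Measure.map Y volume)) := by
  set μ := Measure.map X volume with hμ
  set ν := Measure.map Y volume with hν
  set p := μ.rnDeriv (volume : Measure ℝ) with hp
  have hpm : Measurable p := Measure.measurable_rnDeriv _ _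
  have hμd : volume.withDensity p = μ := Measure.withDensity_rnDeriv_eq μ volume hXac
  have : IsProbabilityMeasure ν := Measure.isProbabilityMeasure_map hY.aemeasurable
  have : IsProbabilityMeasure μ := Measure.isProbabilityMeasure_map hX.aemeasurable
  have hca : ENNReal.ofReal |a| ≠ 0 := ne_of_gt (ENNReal.ofReal_pos.2 (abs_pos.2 ha))
  have hca' : (ENNReal.ofReal |a|)⁻¹ = ENNReal.ofReal |a|⁻¹ := by
    rw [← ENNReal.ofReal_inv_of_pos (abs_pos.2 ha)]
  have hprod : Measure.map (fun ω => (X ω, Y ω)) volume = μ.prod ν :=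
    (ProbabilityTheory.indepFun_iff_map_prod_eq_prod_map_map hX.aemeasurable
      hY.aemeasurable).mp hindep
  have hg : Measurable (fun z : ℝ × ℝ => a * z.1 + b * z.2) := by fun_prop
  have hmm : Measure.map (fun ω => a * X ω + b * Y ω) volume
      = Measure.map (fun z : ℝ × ℝ => a * z.1 + b * z.2) (μ.prod ν) := by
    rw [← hprod, Measure.map_map hg (hX.prodMk hY)]
    rfl
  have hK : Measurable (fun q : ℝ × ℝ => p ((q.1 - b * q.2) / a)) :=
    hpm.comp (by fun_prop)
  have hqm : Measurable (fun t => ∫⁻ y, ENNReal.ofReal |a|⁻¹ * p ((t - b * y) / a) ∂ν) :=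
    Measurable.lintegral_prod_right (by fun_prop)
  rw [hmm]
  ext s hs
  rw [Measure.map_apply hg hs, Measure.prod_apply_symm (hg hs),
    withDensity_apply _ hs]
  set F : ℝ → ℝ≥0∞ := s.indicator (fun _ => 1) with hF
  have hFm : Measurable F := measurable_one.indicator hs
  have hslice : ∀ y : ℝ, μ ((fun x => (x, y)) ⁻¹' ((fun z : ℝ × ℝ => a * z.1 + b * z.2) ⁻¹' s))
      = ENNReal.ofReal |a|⁻¹ * ∫⁻ t, F t * p ((t - b * y) / a) := by
    intro y
    have hset : ((fun x => (x, y)) ⁻¹' ((fun z : ℝ × ℝ => a * z.1 + b * z.2) ⁻¹' s))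
        = {x : ℝ | a * x + b * y ∈ s} := rfl
    have hmset : MeasurableSet {x : ℝ | a * x + b * y ∈ s} := by
      exact (by fun_prop : Measurable fun x : ℝ => a * x + b * y) hs
    rw [hset, ← hμd, withDensity_apply _ hmset, ← lintegral_indicator hmset]
    have hieq : ∀ x : ℝ, {x : ℝ | a * x + b * y ∈ s}.indicator p x
        = F (a * x + b * y) * p x := by
      intro x
      by_cases hx : a * x + b * y ∈ s
      · simp [Set.indicator_of_mem, hx, hF, Set.mem_setOf_eq]
      · simp [Set.indicator_of_notMem, hx, hF, Set.mem_setOf_eq]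
    rw [lintegral_congr hieq]
    have hcv := aux_change_var ha (b * y) (fun x => F (a * x + b * y) * p x)
      ((hFm.comp (by fun_prop)).mul hpm)
    have harg : ∀ t : ℝ, a * ((t - b * y) / a) + b * y = t := fun t => by field_simp; ring
    simp only [harg] at hcv
    rw [hcv, ← mul_assoc, ← hca', ENNReal.inv_mul_cancel hca ENNReal.ofReal_ne_top, one_mul]
  calc ∫⁻ y, μ ((fun x => (x, y)) ⁻¹' ((fun z : ℝ × ℝ => a * z.1 + b * z.2) ⁻¹' s)) ∂ν
      = ∫⁻ y, ∫⁻ t, F t * (ENNReal.ofReal |a|⁻¹ * p ((t - b * y) / a)) ∂volume ∂ν := by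
        refine lintegral_congr fun y => ?_
        rw [hslice y, ← lintegral_const_mul _ (show Measurable fun t : ℝ => F t * p ((t - b * y) / a) from hFm.mul (hpm.comp (by fun_prop)))]
        exact lintegral_congr fun t => by ring
    _ = ∫⁻ t, ∫⁻ y, F t * (ENNReal.ofReal |a|⁻¹ * p ((t - b * y) / a)) ∂ν ∂volume := by
        refine (lintegral_lintegral_swap ?_).symm
        apply Measurable.aemeasurable
        fun_prop
    _ = ∫⁻ t in s, ∫⁻ y, ENNReal.ofReal |a|⁻¹ * p ((t - b * y) / a) ∂ν ∂volume := by
        rw [← lintegral_indicator hs]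
        refine lintegral_congr fun t => ?_
        by_cases hts : t ∈ s
        · rw [Set.indicator_of_mem hts]
          rw [lintegral_congr fun y => by rw [hF, Set.indicator_of_mem hts, one_mul]]
        · rw [Set.indicator_of_notMem hts]
          rw [lintegral_congr fun y => by
            rw [hF, Set.indicator_of_notMem hts, zero_mul]]
          simp

/-- For independent `X, Y`, with `X` having a density, and `a² + b² = 1`, `a ≠ 0`:
`1 + χ²(aX + bY, Z) ≤ |a|⁻¹ (1 + χ²(X,Z)) · E e^{Y²/2}`. -/
theorem chiSq_perturbation_bound {Ω : Type*} [MeasureSpace Ω]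
    [IsProbabilityMeasure (volume : Measure Ω)]
    (X Y : Ω → ℝ) (hX : Measurable X) (hY : Measurable Y)
    (hindep : IndepFun X Y)
    (hXac : Measure.map X volume ≪ (volume : Measure ℝ))
    (a b : ℝ) (hab : a ^ 2 + b ^ 2 = 1) (ha : a ≠ 0) :
    onePlusChiSq (Measure.map (fun ω => a * X ω + b * Y ω) volume)
      ≤ ENNReal.ofReal |a|⁻¹ * onePlusChiSq (Measure.map X volume) *
          ∫⁻ ω, ENNReal.ofReal (Real.exp (Y ω ^ 2 / 2)) := by
  set μ := Measure.map X volume with hμ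
  set ν := Measure.map Y volume with hν
  set p := μ.rnDeriv (volume : Measure ℝ) with hp
  set φ : ℝ → ℝ≥0∞ := gaussianPDF 0 1 with hφ
  set c := ENNReal.ofReal |a|⁻¹ with hc
  have hpm : Measurable p := Measure.measurable_rnDeriv _ _
  have hφm : Measurable φ := measurable_gaussianPDF 0 1
  have hφ0 : ∀ x, φ x ≠ 0 := fun x => (gaussianPDF_pos 0 one_ne_zero x).ne'
  have hφt : ∀ x, φ x ≠ ⊤ := fun x => ENNReal.ofReal_ne_top
  have : IsProbabilityMeasure ν := Measure.isProbabilityMeasure_map hY.aemeasurable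
  have hμd : volume.withDensity p = μ := Measure.withDensity_rnDeriv_eq μ volume hXac
  set q : ℝ → ℝ≥0∞ := fun t => ∫⁻ y, c * p ((t - b * y) / a) ∂ν with hqdef
  have hqm : Measurable q := Measurable.lintegral_prod_right (by fun_prop)
  -- rewrite LHS
  have hmap : Measure.map (fun ω => a * X ω + b * Y ω) volume = volume.withDensity q :=
    map_comb_withDensity X Y hX hY hindep hXac a b ha
  rw [hmap, onePlusChiSq_withDensity q hqm]
  -- rewrite the χ² of X
  have hI : onePlusChiSq μ = ∫⁻ x, p x ^ 2 / φ x := by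
    rw [← hμd, onePlusChiSq_withDensity p hpm]
  set I := ∫⁻ x, p x ^ 2 / φ x with hIdef
  -- rewrite E
  have hE : (∫⁻ ω, ENNReal.ofReal (Real.exp (Y ω ^ 2 / 2)))
      = ∫⁻ y, ENNReal.ofReal (Real.exp (y ^ 2 / 2)) ∂ν := by
    rw [hν, lintegral_map (by fun_prop) hY]
  set E := ∫⁻ y, ENNReal.ofReal (Real.exp (y ^ 2 / 2)) ∂ν with hEdef
  rw [hI, hE]
  -- the slice integral of squared densities
  set S : ℝ → ℝ≥0∞ := fun t => ∫⁻ y, p ((t - b * y) / a) ^ 2 / φ ((t - b * y) / a) ∂ν with hS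
  have hSm : Measurable S := Measurable.lintegral_prod_right (by fun_prop)
  -- pointwise bound
  have hpt : ∀ t : ℝ, q t ^ 2 / φ t ≤ c ^ 2 * E * S t := by
    intro t
    have hqt : q t = c * ∫⁻ y, p ((t - b * y) / a) ∂ν := by
      rw [hqdef]
      exact lintegral_const_mul c (hpm.comp (by fun_prop))
    have hCS : (∫⁻ y, p ((t - b * y) / a) ∂ν) ^ 2
        ≤ S t * ∫⁻ y, φ ((t - b * y) / a) ∂ν := by
      refine lintegral_sq_le _ _ ((hpm.comp (by fun_prop)).aemeasurable)
        ((hφm.comp (by fun_prop)).aemeasurable) (fun y => hφ0 _) (fun y => hφt _)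
    have hub : (∫⁻ y, φ ((t - b * y) / a) ∂ν) ≤ φ t * E := by
      calc (∫⁻ y, φ ((t - b * y) / a) ∂ν)
          ≤ ∫⁻ y, φ t * ENNReal.ofReal (Real.exp (y ^ 2 / 2)) ∂ν :=
            lintegral_mono fun y => gauss_bound hab ha t y
        _ = φ t * E := lintegral_const_mul _ (by fun_prop)
    have hq2 : q t ^ 2 ≤ (c ^ 2 * E * S t) * φ t := by
      rw [hqt, mul_pow]
      calc c ^ 2 * (∫⁻ y, p ((t - b * y) / a) ∂ν) ^ 2
          ≤ c ^ 2 * (S t * (φ t * E)) := by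
            refine mul_le_mul_right (hCS.trans (mul_le_mul_right hub _)) _
        _ = (c ^ 2 * E * S t) * φ t := by ring
    rw [ENNReal.div_le_iff (hφ0 t) (hφt t)]
    exact hq2
  calc ∫⁻ t, q t ^ 2 / φ t
      ≤ ∫⁻ t, c ^ 2 * E * S t := lintegral_mono hpt
    _ = c ^ 2 * E * ∫⁻ t, S t := lintegral_const_mul _ hSm
    _ = c ^ 2 * E * (ENNReal.ofReal |a| * I) := by
        congr 1
        calc ∫⁻ t, S t
            = ∫⁻ y, ∫⁻ t, p ((t - b * y) / a) ^ 2 / φ ((t - b * y) / a) ∂volume ∂ν :=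
              lintegral_lintegral_swap (by apply Measurable.aemeasurable; fun_prop)
          _ = ∫⁻ y, ENNReal.ofReal |a| * I ∂ν := by
              refine lintegral_congr fun y => ?_
              exact aux_change_var ha (b * y) (fun x => p x ^ 2 / φ x)
                ((hpm.pow_const 2).div hφm)
          _ = ENNReal.ofReal |a| * I := by
              rw [lintegral_const, measure_univ, mul_one]
    _ = c * I * E := by
        have : c * ENNReal.ofReal |a| = 1 := by
          rw [hc, ← ENNReal.ofReal_mul (by positivity),
            inv_mul_cancel₀ (abs_ne_zero.2 ha), ENNReal.ofReal_one]
        calc c ^ 2 * E * (ENNReal.ofReal |a| * I)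
            = (c * ENNReal.ofReal |a|) * (c * I * E) := by ring
          _ = c * I * E := by rw [this, one_mul]
end

section
/- Let X, X₁, X₂, ... be i.i.d. real random variables with characteristic function f extending to an entire function, Z_n = (X₁+...+X_n)/√n, and α > 1 with β = α/(α-1). If liminf_n (1/n) D_α(Z_n||Z) = 0, then E e^{-yX} = f(iy) ≤ e^{β y²/2} for all real y. -/
open MeasureTheory ProbabilityTheory Filter Classical
open scoped ENNReal

/-- The Rényi divergence `D_α(ν || N(0,1))`, valued in `[0,∞]`: equal to
`(α-1)⁻¹ log ∫ (dν/dγ)^α dγ` when `ν ≪ γ = N(0,1)` and this integral is finite,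
and `∞` otherwise. -/
noncomputable def renyiDiv (α : ℝ) (ν : Measure ℝ) : ℝ≥0∞ :=
  if ν ≪ gaussianReal 0 1 ∧ (∫⁻ x, (ν.rnDeriv (gaussianReal 0 1) x) ^ α ∂(gaussianReal 0 1)) ≠ ⊤
  then ENNReal.ofReal ((α - 1)⁻¹ *
    Real.log (∫⁻ x, (ν.rnDeriv (gaussianReal 0 1) x) ^ α ∂(gaussianReal 0 1)).toReal)
  else ⊤

lemma lintegral_exp_gaussian (s : ℝ) :
    ∫⁻ x, ENNReal.ofReal (Real.exp (s * x)) ∂(gaussianReal 0 1)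
      = ENNReal.ofReal (Real.exp (s ^ 2 / 2)) := by
  rw [gaussianReal_of_var_ne_zero 0 one_ne_zero,
    lintegral_withDensity_eq_lintegral_mul _ (measurable_gaussianPDF 0 1)
      (by fun_prop : Measurable fun x : ℝ => ENNReal.ofReal (Real.exp (s * x)))]
  have heq : ∀ x : ℝ, (gaussianPDF 0 1 x) * ENNReal.ofReal (Real.exp (s * x))
      = ENNReal.ofReal (Real.exp (s ^ 2 / 2)) * ENNReal.ofReal (gaussianPDFReal s 1 x) := by
    intro x
    rw [gaussianPDF, ← ENNReal.ofReal_mul (gaussianPDFReal_nonneg 0 1 x),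
      ← ENNReal.ofReal_mul (Real.exp_pos _).le]
    congr 1
    simp only [gaussianPDFReal]
    rw [mul_assoc, ← Real.exp_add, mul_left_comm, ← Real.exp_add]
    congr 2
    push_cast
    ring
  simp only [Pi.mul_apply, heq]
  rw [lintegral_const_mul _ (measurable_gaussianPDFReal s 1).ennreal_ofReal,
    lintegral_gaussianPDFReal_eq_one s one_ne_zero, mul_one]

/-- If `X, X₁, X₂, …` are i.i.d., the MGF of `X` is everywhere finite (so that the
characteristic function extends to an entire function), and
`liminf_n (1/n) D_α(Z_n || Z) = 0` for `Z_n = (X₁ + ⋯ + X_n)/√n`, then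
`E e^{-yX} ≤ e^{β y²/2}` for all real `y`, where `β = α/(α-1)`. -/
theorem subgaussian_of_liminf_renyi {Ω : Type*} [MeasureSpace Ω]
    [IsProbabilityMeasure (volume : Measure Ω)]
    (α β : ℝ) (hα : 1 < α) (hβ : β = α / (α - 1))
    (X : ℕ → Ω → ℝ) (hmeas : ∀ i, Measurable (X i))
    (hindep : iIndepFun X)
    (hid : ∀ i, IdentDistrib (X i) (X 0))
    (hentire : ∀ t : ℝ, (∫⁻ ω, ENNReal.ofReal (Real.exp (t * X 0 ω))) ≠ ⊤)
    (hliminf : liminf (fun n : ℕ =>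
        renyiDiv α (Measure.map
          (fun ω => (∑ i ∈ Finset.range n, X i ω) / Real.sqrt n) volume) / (n : ℝ≥0∞))
      atTop = 0) :
    ∀ y : ℝ, (∫⁻ ω, ENNReal.ofReal (Real.exp (-y * X 0 ω)))
      ≤ ENNReal.ofReal (Real.exp (β * y ^ 2 / 2)) := by
  intro y
  have hα1 : (0:ℝ) < α - 1 := sub_pos.2 hα
  have hα0 : (0:ℝ) < α := lt_trans one_pos hα
  have hβ0 : (0:ℝ) < β := by rw [hβ]; positivity
  have hpq : α.HolderConjugate β := by rw [hβ]; exact Real.HolderConjugate.conjExponent hα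
  -- integrability of all exponentials
  have hint0 : ∀ t : ℝ, Integrable (fun ω => Real.exp (t * X 0 ω)) volume := by
    intro t
    refine ⟨(((hmeas 0).const_mul t).exp).aestronglyMeasurable, ?_⟩
    rw [hasFiniteIntegral_iff_ofReal (ae_of_all _ fun ω => (Real.exp_pos _).le)]
    exact lt_top_iff_ne_top.2 (hentire t)
  have hint : ∀ (t : ℝ) (i : ℕ), Integrable (fun ω => Real.exp (t * X i ω)) volume := by
    intro t i
    have h := (hid i).comp (show Measurable fun x : ℝ => Real.exp (t * x) by fun_prop)
    exact h.integrable_iff.2 (hint0 t)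
  set m := mgf (X 0) volume (-y) with hm
  have hm0 : 0 ≤ m := mgf_nonneg
  have hLHS : (∫⁻ ω, ENNReal.ofReal (Real.exp (-y * X 0 ω))) = ENNReal.ofReal m := by
    rw [← ofReal_integral_eq_lintegral_ofReal (hint0 (-y))
      (ae_of_all _ fun ω => (Real.exp_pos _).le)]
    rfl
  -- the key estimate for a single n
  have key : ∀ n : ℕ, 0 < n →
      ∀ _ : Measure.map (fun ω => (∑ i ∈ Finset.range n, X i ω) / Real.sqrt n) volume
          ≪ gaussianReal 0 1,
      ENNReal.ofReal m ^ n ≤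
        (∫⁻ x, ((Measure.map (fun ω => (∑ i ∈ Finset.range n, X i ω) / Real.sqrt n)
            volume).rnDeriv (gaussianReal 0 1) x) ^ α ∂(gaussianReal 0 1)) ^ (1/α)
          * ENNReal.ofReal (Real.exp (β * y ^ 2 * n / 2)) := by
    intro n hn hac
    set Z : Ω → ℝ := fun ω => (∑ i ∈ Finset.range n, X i ω) / Real.sqrt n with hZdef
    set ν := Measure.map Z volume with hν
    set g := ν.rnDeriv (gaussianReal 0 1) with hg
    set t : ℝ := -y * Real.sqrt n with ht
    have hsq : (0:ℝ) < Real.sqrt n := Real.sqrt_pos.2 (by exact_mod_cast hn)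
    have hZmeas : Measurable Z := (Finset.measurable_sum _ fun i _ => hmeas i).div_const _
    have hA : (∫⁻ z, ENNReal.ofReal (Real.exp (t * z)) ∂ν) = ENNReal.ofReal m ^ n := by
      rw [hν, lintegral_map (by fun_prop) hZmeas]
      have harg : ∀ ω, t * Z ω = -y * (∑ i ∈ Finset.range n, X i) ω := by
        intro ω
        simp only [hZdef, ht, Finset.sum_apply]
        field_simp
      simp_rw [harg]
      have hintS : Integrable (fun ω => Real.exp (-y * (∑ i ∈ Finset.range n, X i) ω)) volume :=
        hindep.integrable_exp_mul_sum hmeas (fun i _ => hint (-y) i)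
      rw [← ofReal_integral_eq_lintegral_ofReal hintS
        (ae_of_all _ fun ω => (Real.exp_pos _).le)]
      have hmgf : mgf (∑ i ∈ Finset.range n, X i) volume (-y) = m ^ n := by
        rw [hindep.mgf_sum hmeas]
        have hmi : ∀ i, mgf (X i) volume (-y) = m := by
          intro i
          exact ((hid i).comp
            (show Measurable fun x : ℝ => Real.exp (-y * x) by fun_prop)).integral_eq
        simp [hmi, Finset.prod_const]
      rw [show (∫ ω, Real.exp (-y * (∑ i ∈ Finset.range n, X i) ω)) =
        mgf (∑ i ∈ Finset.range n, X i) volume (-y) from rfl, hmgf,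
        ENNReal.ofReal_pow hm0]
    have hB : (∫⁻ z, ENNReal.ofReal (Real.exp (t * z)) ∂ν)
        = ∫⁻ z, g z * ENNReal.ofReal (Real.exp (t * z)) ∂(gaussianReal 0 1) :=
      (MeasureTheory.lintegral_rnDeriv_mul hac (by fun_prop)).symm
    have hC := ENNReal.lintegral_mul_le_Lp_mul_Lq (gaussianReal 0 1) hpq (f := g)
      (Measure.measurable_rnDeriv ν (gaussianReal 0 1)).aemeasurable
      ((by fun_prop : Measurable fun z : ℝ => ENNReal.ofReal (Real.exp (t * z))).aemeasurable)
    have hD : (∫⁻ z, (ENNReal.ofReal (Real.exp (t * z))) ^ β ∂(gaussianReal 0 1)) ^ (1/β)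
        = ENNReal.ofReal (Real.exp (β * y ^ 2 * n / 2)) := by
      have h1 : ∀ z : ℝ, (ENNReal.ofReal (Real.exp (t * z))) ^ β
          = ENNReal.ofReal (Real.exp ((β * t) * z)) := by
        intro z
        rw [ENNReal.ofReal_rpow_of_pos (Real.exp_pos _), ← Real.exp_mul]
        congr 1; ring
      simp_rw [h1, lintegral_exp_gaussian]
      rw [ENNReal.ofReal_rpow_of_pos (Real.exp_pos _), ← Real.exp_mul]
      congr 1
      have ht2 : t ^ 2 = y ^ 2 * n := by
        rw [ht, mul_pow, neg_pow, Real.sq_sqrt (Nat.cast_nonneg n)]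
        ring
      rw [mul_pow, ht2]
      field_simp
    calc ENNReal.ofReal m ^ n = ∫⁻ z, g z * ENNReal.ofReal (Real.exp (t * z))
          ∂(gaussianReal 0 1) := by rw [← hB, hA]
      _ ≤ (∫⁻ z, g z ^ α ∂(gaussianReal 0 1)) ^ (1/α)
          * (∫⁻ z, (ENNReal.ofReal (Real.exp (t * z))) ^ β ∂(gaussianReal 0 1)) ^ (1/β) := by
        simpa using hC
      _ = _ := by rw [hD]
  -- for every ε > 0, a subgaussian bound up to a factor
  have main : ∀ ε : ℝ, 0 < ε →
      m ≤ Real.exp ((α - 1) * ε / α) * Real.exp (β * y ^ 2 / 2) := by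
    intro ε hε
    have h0 : liminf (fun n : ℕ =>
        renyiDiv α (Measure.map
          (fun ω => (∑ i ∈ Finset.range n, X i ω) / Real.sqrt n) volume) / (n : ℝ≥0∞))
        atTop < ENNReal.ofReal ε := by
      rw [hliminf]; exact ENNReal.ofReal_pos.2 hε
    have hfreq := frequently_lt_of_liminf_lt (by isBoundedDefault) h0
    obtain ⟨n, hnlt, hn1⟩ := (hfreq.and_eventually (eventually_ge_atTop 1)).exists
    have hn0 : (0:ℕ) < n := hn1
    set ν := Measure.map (fun ω => (∑ i ∈ Finset.range n, X i ω) / Real.sqrt n)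
      (volume : Measure Ω) with hν
    set I := ∫⁻ x, (ν.rnDeriv (gaussianReal 0 1) x) ^ α ∂(gaussianReal 0 1) with hI
    have hnne : ((n:ℝ≥0∞)) ≠ 0 := by exact_mod_cast Nat.pos_iff_ne_zero.1 hn0
    have hnnt : ((n:ℝ≥0∞)) ≠ ⊤ := ENNReal.natCast_ne_top n
    have hcond : ν ≪ gaussianReal 0 1 ∧ I ≠ ⊤ := by
      by_contra hc
      rw [renyiDiv, if_neg hc, ENNReal.top_div_of_ne_top hnnt] at hnlt
      exact (not_top_lt hnlt)
    obtain ⟨hac, hIne⟩ := hcond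
    rw [renyiDiv, if_pos ⟨hac, hIne⟩] at hnlt
    rw [ENNReal.div_lt_iff (Or.inl hnne) (Or.inl hnnt)] at hnlt
    have hnlt' : ENNReal.ofReal ((α - 1)⁻¹ * Real.log I.toReal)
        < ENNReal.ofReal (ε * n) := by
      rw [ENNReal.ofReal_mul hε.le, ENNReal.ofReal_natCast]
      exact hnlt
    have hεn : (0:ℝ) < ε * n := by
      have : (0:ℝ) < (n:ℝ) := by exact_mod_cast hn0
      positivity
    have hlog : (α - 1)⁻¹ * Real.log I.toReal < ε * n :=
      (ENNReal.ofReal_lt_ofReal_iff hεn).1 hnlt'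
    have hlog2 : Real.log I.toReal ≤ (α - 1) * (ε * n) :=
      ((inv_mul_lt_iff₀ hα1).1 hlog).le
    have hItop : I ≤ ENNReal.ofReal (Real.exp ((α - 1) * (ε * n))) := by
      rw [← ENNReal.ofReal_toReal hIne]
      apply ENNReal.ofReal_le_ofReal
      rcases le_or_gt I.toReal 0 with h | h
      · exact h.trans (Real.exp_pos _).le
      · exact ((Real.log_le_iff_le_exp h).1 hlog2)
    have hkey := key n hn0 hac
    have hI14 : I ^ (1/α) ≤ ENNReal.ofReal (Real.exp ((α - 1) * (ε * n) / α)) := by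
      calc I ^ (1/α) ≤ (ENNReal.ofReal (Real.exp ((α - 1) * (ε * n)))) ^ (1/α) :=
            ENNReal.rpow_le_rpow hItop (by positivity)
        _ = ENNReal.ofReal (Real.exp ((α - 1) * (ε * n) / α)) := by
            rw [ENNReal.ofReal_rpow_of_pos (Real.exp_pos _), ← Real.exp_mul]
            congr 1
            field_simp
    have hfull : ENNReal.ofReal m ^ n ≤
        ENNReal.ofReal ((Real.exp ((α - 1) * ε / α) * Real.exp (β * y ^ 2 / 2)) ^ n) := by
      refine hkey.trans ?_
      calc _ ≤ ENNReal.ofReal (Real.exp ((α - 1) * (ε * n) / α))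
            * ENNReal.ofReal (Real.exp (β * y ^ 2 * n / 2)) :=
          mul_le_mul_left hI14 _
        _ = ENNReal.ofReal ((Real.exp ((α - 1) * ε / α) * Real.exp (β * y ^ 2 / 2)) ^ n) := by
          rw [← ENNReal.ofReal_mul (Real.exp_pos _).le, ← Real.exp_add,
            ← Real.exp_add, ← Real.exp_nat_mul]
          congr 1
          field_simp
    have hmn : m ^ n ≤ (Real.exp ((α - 1) * ε / α) * Real.exp (β * y ^ 2 / 2)) ^ n := by
      rw [← ENNReal.ofReal_pow hm0] at hfull
      exact (ENNReal.ofReal_le_ofReal_iff (by positivity)).1 hfull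
    exact le_of_pow_le_pow_left₀ (Nat.pos_iff_ne_zero.1 hn0) (by positivity) hmn
  -- let ε → 0
  have hfinal : m ≤ Real.exp (β * y ^ 2 / 2) := by
    have htend : Tendsto (fun k : ℕ =>
        Real.exp ((α - 1) * (1 / ((k:ℝ) + 1)) / α) * Real.exp (β * y ^ 2 / 2)) atTop
        (nhds (Real.exp 0 * Real.exp (β * y ^ 2 / 2))) := by
      refine Tendsto.mul_const _ ?_
      refine (Real.continuous_exp.tendsto 0).comp ?_
      have h1 : Tendsto (fun k : ℕ => 1 / ((k:ℝ) + 1)) atTop (nhds 0) :=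
        tendsto_one_div_add_atTop_nhds_zero_nat
      have := (h1.const_mul (α - 1)).div_const α
      simpa using this
    have hle := ge_of_tendsto htend (Eventually.of_forall fun k =>
      main (1 / ((k:ℝ) + 1)) (by positivity))
    simpa using hle
  rw [hLHS]
  exact ENNReal.ofReal_le_ofReal hfinal
end

section
/- Let ψ : ℝ → ℝ be real-analytic with 0 < ψ(u) ≤ 1 for all u, and suppose ψ(u₀) = 1 for some u₀ > 0. Then there exist m ≥ 1, r₀ ∈ (0, u₀), and c₀ > 0 such that ψ(u) ≥ e^{-c₀ (u-u₀)^{2m}} for |u - u₀| ≤ r₀; consequently ∫_{|u|>u₀-r₀} ψ(u)^{2n} du ≥ c n^{-1/(2m)} for some c > 0 and all large n. -/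
open MeasureTheory Filter

lemma pointwise_bd (ψ : ℝ → ℝ)
    (hana : ∀ x : ℝ, AnalyticAt ℝ ψ x)
    (hpos : ∀ u, 0 < ψ u) (hle : ∀ u, ψ u ≤ 1)
    (u₀ : ℝ) (hu₀ : 0 < u₀) (hmax : ψ u₀ = 1) :
    ∃ m : ℕ, 1 ≤ m ∧ ∃ r₀ : ℝ, 0 < r₀ ∧ r₀ < u₀ ∧
      ∃ c₀ : ℝ, 0 < c₀ ∧ ∀ u : ℝ, |u - u₀| ≤ r₀ →
        Real.exp (-c₀ * (u - u₀) ^ (2 * m)) ≤ ψ u := by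
  set φ : ℝ → ℝ := fun u => 1 - ψ u with hφ
  have hφana : AnalyticAt ℝ φ u₀ := analyticAt_const.sub (hana u₀)
  have hφ0 : φ u₀ = 0 := by simp [hφ, hmax]
  have hφnn : ∀ u, 0 ≤ φ u := fun u => by simp [hφ]; linarith [hle u]
  -- key claim: ∃ m ≥ 1, ∃ δ > 0, C > 0, ∀ |u - u₀| < δ, φ u ≤ C * (u-u₀)^(2m)
  have key : ∃ m : ℕ, 1 ≤ m ∧ ∃ δ > 0, ∃ C > 0,
      ∀ u, |u - u₀| < δ → φ u ≤ C * (u - u₀) ^ (2 * m) := by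
    rcases eq_or_ne (analyticOrderAt φ u₀) ⊤ with htop | hne
    · -- φ ≡ 0 near u₀
      have := analyticOrderAt_eq_top.mp htop
      rw [Metric.eventually_nhds_iff] at this
      obtain ⟨δ, hδ, h⟩ := this
      exact ⟨1, le_refl 1, δ, hδ, 1, one_pos, fun u hu => by
        rw [h (by simpa [Real.dist_eq] using hu)]
        norm_num
        positivity⟩
    · lift analyticOrderAt φ u₀ to ℕ using hne with k hk
      obtain ⟨g, hg, hg0, hev⟩ := (hφana.analyticOrderAt_eq_natCast (n := k)).mp hk.symm
      rw [Metric.eventually_nhds_iff] at hev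
      obtain ⟨ε, hε, hev⟩ := hev
      -- continuity of g
      have hgc : ContinuousAt g u₀ := hg.continuousAt
      have : ∀ᶠ u in nhds u₀, |g u - g u₀| < |g u₀| / 2 := by
        have := hgc.eventually (Metric.ball_mem_nhds (g u₀) (by positivity : (0:ℝ) < |g u₀|/2))
        filter_upwards [this] with u hu
        simpa [Real.dist_eq] using hu
      rw [Metric.eventually_nhds_iff] at this
      obtain ⟨ε', hε', hg'⟩ := this
      set δ := min ε ε' with hδdef
      have hδ : 0 < δ := lt_min hε hε'
      have hloc : ∀ u, |u - u₀| < δ → φ u = (u - u₀) ^ k * g u ∧ |g u - g u₀| < |g u₀| / 2 := by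
        intro u hu
        constructor
        · have := hev (show dist u u₀ < ε by rw [Real.dist_eq]; exact hu.trans_le (min_le_left _ _))
          simpa [smul_eq_mul] using this
        · exact hg' (show dist u u₀ < ε' by rw [Real.dist_eq]; exact hu.trans_le (min_le_right _ _))
      -- g u₀ > 0
      have hgpos : 0 < g u₀ := by
        rcases hg0.lt_or_gt with hneg | hpos'
        · exfalso
          have hu : |(u₀ + δ/2) - u₀| < δ := by
            simp [abs_of_nonneg (by positivity : (0:ℝ) ≤ δ/2)]; linarith
          obtain ⟨he, hgu⟩ := hloc _ hu
          have hgu_neg : g (u₀ + δ/2) < 0 := by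
            rw [abs_lt] at hgu
            have : |g u₀| = -g u₀ := abs_of_neg hneg
            linarith [hgu.2, this ▸ hgu.2]
          have hk0 : (0:ℝ) < ((u₀ + δ/2) - u₀) ^ k := by
            apply pow_pos; linarith
          have := hφnn (u₀ + δ/2)
          nlinarith [he]
        · exact hpos'
      -- k even
      have hkeven : Even k := by
        by_contra hodd
        rw [Nat.not_even_iff_odd] at hodd
        have hu : |(u₀ - δ/2) - u₀| < δ := by
          rw [show (u₀ - δ/2) - u₀ = -(δ/2) by ring, abs_neg,
            abs_of_nonneg (by positivity : (0:ℝ) ≤ δ/2)]; linarith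
        obtain ⟨he, hgu⟩ := hloc _ hu
        have hgu_pos : 0 < g (u₀ - δ/2) := by
          rw [abs_lt, abs_of_pos hgpos] at hgu
          linarith
        have hkneg : ((u₀ - δ/2) - u₀) ^ k < 0 := by
          apply hodd.pow_neg; linarith
        have := hφnn (u₀ - δ/2)
        nlinarith [he]
      -- k ≠ 0
      have hk0 : k ≠ 0 := by
        intro h
        obtain ⟨he, _⟩ := hloc u₀ (by simpa using hδ)
        rw [h, pow_zero, one_mul] at he
        exact hg0 (he.symm.trans hφ0)
      obtain ⟨m, hm⟩ := id hkeven
      have hm1 : 1 ≤ m := by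
        rcases Nat.eq_zero_or_pos m with h | h
        · exact absurd (by omega : k = 0) hk0
        · exact h
      refine ⟨m, hm1, δ, hδ, 3/2 * g u₀, by positivity, fun u hu => ?_⟩
      obtain ⟨he, hgu⟩ := hloc u hu
      have h2m : 2 * m = k := by omega
      rw [h2m, he]
      have hpow : 0 ≤ (u - u₀) ^ k := Even.pow_nonneg hkeven _
      rw [abs_lt, abs_of_pos hgpos] at hgu
      nlinarith
  obtain ⟨m, hm1, δ, hδ, C, hC, hkey⟩ := key
  set r₀ : ℝ := min (min (δ/2) (u₀/2)) (min 1 (1/(2*C))) with hr₀def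
  have hr₀pos : 0 < r₀ := by
    apply lt_min (lt_min (by positivity) (by positivity)) (lt_min one_pos (by positivity))
  have hr₀u₀ : r₀ < u₀ := by
    calc r₀ ≤ u₀/2 := (min_le_left _ _).trans (min_le_right _ _)
    _ < u₀ := by linarith
  refine ⟨m, hm1, r₀, hr₀pos, hr₀u₀, 2*C, by positivity, fun u hu => ?_⟩
  have hx : C * (u - u₀) ^ (2*m) ≤ 1/2 := by
    have h1 : (u - u₀) ^ (2*m) = |u - u₀| ^ (2*m) :=
      ((even_two_mul m).pow_abs _).symm
    have h2 : |u - u₀| ^ (2*m) ≤ r₀ ^ (2*m) :=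
      pow_le_pow_left₀ (abs_nonneg _) hu _
    have hr1 : r₀ ≤ 1 := (min_le_right _ _).trans (min_le_left _ _)
    have h3 : r₀ ^ (2*m) ≤ r₀ := by
      calc r₀ ^ (2*m) ≤ r₀ ^ 1 := pow_le_pow_of_le_one hr₀pos.le hr1 (by omega)
      _ = r₀ := pow_one _
    have h4 : r₀ ≤ 1/(2*C) := (min_le_right _ _).trans (min_le_right _ _)
    have h5 : (u - u₀) ^ (2*m) ≤ 1/(2*C) := by
      rw [h1]; exact h2.trans (h3.trans h4)
    calc C * (u - u₀) ^ (2*m) ≤ C * (1/(2*C)) :=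
      mul_le_mul_of_nonneg_left h5 hC.le
    _ = 1/2 := by field_simp
  have hxnn : 0 ≤ C * (u - u₀) ^ (2*m) := by
    have := (even_two_mul m).pow_nonneg (u - u₀)
    positivity
  have hφle : φ u ≤ C * (u - u₀) ^ (2*m) := by
    apply hkey
    calc |u - u₀| ≤ r₀ := hu
    _ ≤ δ/2 := (min_le_left _ _).trans (min_le_left _ _)
    _ < δ := by linarith
  -- exp(-2x) ≤ 1 - x for 0 ≤ x ≤ 1/2
  set x := C * (u - u₀) ^ (2*m) with hxdef
  have hexp : Real.exp (-(2*x)) ≤ 1 - x := by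
    have h1 : 1 + 2*x ≤ Real.exp (2*x) := by
      have := Real.add_one_le_exp (2*x); linarith
    have h2 : Real.exp (-(2*x)) = 1 / Real.exp (2*x) := by
      rw [Real.exp_neg]; ring
    rw [h2]
    rw [div_le_iff₀ (Real.exp_pos _)]
    nlinarith [Real.exp_pos (2*x)]
  have hψ : 1 - x ≤ ψ u := by
    have := hφle; simp only [hφ] at this; linarith
  calc Real.exp (-(2*C) * (u - u₀) ^ (2*m)) = Real.exp (-(2*x)) := by
        rw [hxdef]; ring_nf
  _ ≤ 1 - x := hexp
  _ ≤ ψ u := hψ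


lemma integral_part (ψ : ℝ → ℝ) (hcont : Continuous ψ) (hpos : ∀ u, 0 < ψ u)
    (m : ℕ) (hm : 1 ≤ m) (u₀ r₀ c₀ : ℝ) (hr : 0 < r₀) (hru : r₀ < u₀) (hc₀ : 0 < c₀)
    (hbd : ∀ u, |u - u₀| ≤ r₀ → Real.exp (-c₀ * (u - u₀) ^ (2 * m)) ≤ ψ u) :
    ∃ c : ℝ, 0 < c ∧ ∃ N : ℕ, ∀ n : ℕ, N ≤ n →
      ENNReal.ofReal (c * (n : ℝ) ^ (-(1 / (2 * (m : ℝ)))))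
        ≤ ∫⁻ u in {u : ℝ | u₀ - r₀ < |u|}, ENNReal.ofReal (ψ u ^ (2 * n)) := by
  have hu₀ : 0 < u₀ := hr.trans hru
  set e : ℝ := -(1 / (2 * (m : ℝ))) with he
  have hmR : (0:ℝ) < 2 * m := by positivity
  refine ⟨Real.exp (-1) * (2*c₀) ^ e, by positivity,
    max 1 ⌈1/(2*c₀*r₀^(2*m))⌉₊, fun n hn => ?_⟩
  have hn1 : 1 ≤ n := le_trans (le_max_left _ _) hn
  have hnR : (1:ℝ) ≤ n := by exact_mod_cast hn1
  set t : ℝ := (2*c₀*n) ^ e with ht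
  have hbase : (0:ℝ) < 2*c₀*n := by positivity
  have htpos : 0 < t := Real.rpow_pos_of_pos hbase _
  have htpow : t ^ (2*m) = 1/(2*c₀*n) := by
    rw [ht, ← Real.rpow_natCast ((2*c₀*n) ^ e) (2*m), ← Real.rpow_mul hbase.le]
    have : e * ((2*m : ℕ) : ℝ) = -1 := by
      rw [he]; push_cast; field_simp
    rw [this, Real.rpow_neg_one]
    ring
  have hrpow : 0 < r₀ ^ (2*m) := by positivity
  have htr : t ≤ r₀ := by
    have hceil : (1/(2*c₀*r₀^(2*m)) : ℝ) ≤ n := by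
      refine le_trans (Nat.le_ceil _) ?_
      exact_mod_cast le_trans (le_max_right _ _) hn
    have h1 : t ^ (2*m) ≤ r₀ ^ (2*m) := by
      rw [htpow, div_le_iff₀ hbase]
      have h2 : 1 ≤ 2*c₀*r₀^(2*m) * n := by
        rw [div_le_iff₀ (by positivity)] at hceil
        linarith
      nlinarith
    exact le_of_pow_le_pow_left₀ (by omega) hr.le h1
  -- the interval
  set s : Set ℝ := Set.Ioo (u₀ - t) (u₀ + t) with hs
  have hsub : s ⊆ {u : ℝ | u₀ - r₀ < |u|} := by
    intro u hu
    have h1 : u₀ - t < u := hu.1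
    have : u₀ - r₀ < u := by linarith
    exact lt_of_lt_of_le this (le_abs_self u)
  have hptwise : ∀ u ∈ s, ENNReal.ofReal (Real.exp (-1)) ≤ ENNReal.ofReal (ψ u ^ (2*n)) := by
    intro u hu
    apply ENNReal.ofReal_le_ofReal
    have habs : |u - u₀| ≤ t := by
      rw [abs_le]; constructor <;> [linarith [hu.1]; linarith [hu.2]]
    have hψ : Real.exp (-c₀ * (u - u₀) ^ (2*m)) ≤ ψ u := hbd u (habs.trans htr)
    have h1 : (u - u₀) ^ (2*m) ≤ t ^ (2*m) := by
      calc (u - u₀) ^ (2*m) = |u - u₀| ^ (2*m) := ((even_two_mul m).pow_abs _).symm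
      _ ≤ t ^ (2*m) := pow_le_pow_left₀ (abs_nonneg _) habs _
    have h2 : Real.exp (-c₀ * (u - u₀) ^ (2*m)) ^ (2*n) =
        Real.exp ((2*n) * (-c₀ * (u - u₀) ^ (2*m))) := by
      rw [← Real.exp_nat_mul]; push_cast; ring_nf
    have h3 : Real.exp (-1) ≤ Real.exp ((2*n) * (-c₀ * (u - u₀) ^ (2*m))) := by
      apply Real.exp_le_exp.mpr
      have h4 : (2*n : ℝ) * (c₀ * (u - u₀) ^ (2*m)) ≤ (2*n) * (c₀ * t ^ (2*m)) := by
        apply mul_le_mul_of_nonneg_left (mul_le_mul_of_nonneg_left h1 hc₀.le) (by positivity)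
      have h5 : (2*(n:ℝ)) * (c₀ * t ^ (2*m)) ≤ 1 := by
        rw [htpow]
        rw [div_eq_inv_mul, mul_comm]
        have : c₀ * ((2*c₀*n)⁻¹ * 1) * (2*n) = 1 := by
          field_simp
        nlinarith [this]
      nlinarith
    calc Real.exp (-1) ≤ Real.exp ((2*n) * (-c₀ * (u - u₀) ^ (2*m))) := h3
    _ = Real.exp (-c₀ * (u - u₀) ^ (2*m)) ^ (2*n) := h2.symm
    _ ≤ ψ u ^ (2*n) := pow_le_pow_left₀ (Real.exp_nonneg _) hψ _
  have hmeas : Measurable fun u => ENNReal.ofReal (ψ u ^ (2*n)) :=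
    (ENNReal.continuous_ofReal.comp ((hcont.pow _))).measurable
  have hchain : ENNReal.ofReal (Real.exp (-1)) * volume s
      ≤ ∫⁻ u in {u : ℝ | u₀ - r₀ < |u|}, ENNReal.ofReal (ψ u ^ (2*n)) := by
    calc ENNReal.ofReal (Real.exp (-1)) * volume s
        = ∫⁻ _ in s, ENNReal.ofReal (Real.exp (-1)) := (setLIntegral_const _ _).symm
    _ ≤ ∫⁻ u in s, ENNReal.ofReal (ψ u ^ (2*n)) := setLIntegral_mono hmeas hptwise
    _ ≤ ∫⁻ u in {u : ℝ | u₀ - r₀ < |u|}, ENNReal.ofReal (ψ u ^ (2*n)) :=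
        lintegral_mono_set hsub
  refine le_trans ?_ hchain
  have hvol : volume s = ENNReal.ofReal (2*t) := by
    rw [hs, Real.volume_Ioo]
    congr 1
    ring
  rw [hvol, ← ENNReal.ofReal_mul (Real.exp_nonneg _)]
  apply ENNReal.ofReal_le_ofReal
  have hsplit : (2*c₀*n) ^ e = (2*c₀) ^ e * (n:ℝ) ^ e :=
    Real.mul_rpow (by positivity) (by positivity)
  have : Real.exp (-1) * (2*c₀) ^ e * (n:ℝ) ^ e = Real.exp (-1) * t := by
    rw [ht, hsplit]; ring
  rw [this]
  nlinarith [Real.exp_pos (-1), htpos]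

/-- If `ψ : ℝ → ℝ` is real-analytic with `0 < ψ ≤ 1` and `ψ(u₀) = 1` at some `u₀ > 0`,
then there are `m ≥ 1`, `0 < r₀ < u₀` and `c₀ > 0` with
`ψ(u) ≥ e^{-c₀ (u-u₀)^{2m}}` for `|u - u₀| ≤ r₀`; consequently
`∫_{|u| > u₀ - r₀} ψ(u)^{2n} du ≥ c n^{-1/(2m)}` for some `c > 0` and all large `n`. -/
theorem analytic_max_point_lower_bound (ψ : ℝ → ℝ)
    (hana : ∀ x : ℝ, AnalyticAt ℝ ψ x)
    (hpos : ∀ u, 0 < ψ u) (hle : ∀ u, ψ u ≤ 1)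
    (u₀ : ℝ) (hu₀ : 0 < u₀) (hmax : ψ u₀ = 1) :
    ∃ m : ℕ, 1 ≤ m ∧ ∃ r₀ : ℝ, 0 < r₀ ∧ r₀ < u₀ ∧
      (∃ c₀ : ℝ, 0 < c₀ ∧ ∀ u : ℝ, |u - u₀| ≤ r₀ →
        Real.exp (-c₀ * (u - u₀) ^ (2 * m)) ≤ ψ u) ∧
      ∃ c : ℝ, 0 < c ∧ ∃ N : ℕ, ∀ n : ℕ, N ≤ n →
        ENNReal.ofReal (c * (n : ℝ) ^ (-(1 / (2 * (m : ℝ)))))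
          ≤ ∫⁻ u in {u : ℝ | u₀ - r₀ < |u|}, ENNReal.ofReal (ψ u ^ (2 * n)) := by
  obtain ⟨m, hm, r₀, hr₀, hr₀u, c₀, hc₀, hbd⟩ :=
    pointwise_bd ψ hana hpos hle u₀ hu₀ hmax
  have hcont : Continuous ψ :=
    continuous_iff_continuousAt.mpr fun x => (hana x).continuousAt
  obtain ⟨c, hc, N, hN⟩ :=
    integral_part ψ hcont hpos m hm u₀ r₀ c₀ hr₀ hr₀u hc₀ hbd
  exact ⟨m, hm, r₀, hr₀, hr₀u, ⟨c₀, hc₀, hbd⟩, c, hc, N, hN⟩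
end

section
/- For all real y ≠ 0, sinh(y√3)/(y√3) < e^{y²/2}. Equivalently, if X is uniform on [-√3, √3] then E e^{yX} < e^{y²} for all y ≠ 0. -/
open MeasureTheory

open Finset in

-- base Taylor bound for exp, n = 6
lemma exp_taylor6 {t : ℝ} (h : |t| ≤ 1) :
    |Real.exp t - (1 + t + t^2/2 + t^3/6 + t^4/24 + t^5/120)| ≤ 7 * |t|^6 / 4320 := by
  have h6 := Real.exp_bound h (n := 6) (by norm_num)
  have : ∑ m ∈ range 6, t ^ m / m.factorial
      = 1 + t + t^2/2 + t^3/6 + t^4/24 + t^5/120 := by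
    norm_num [Finset.sum_range_succ, Nat.factorial]
  rw [this] at h6
  calc |Real.exp t - (1 + t + t^2/2 + t^3/6 + t^4/24 + t^5/120)|
      ≤ |t|^6 * ((6:ℕ).succ / ((6:ℕ).factorial * 6)) := h6
    _ = 7 * |t|^6 / 4320 := by norm_num [Nat.factorial]; ring

lemma sinh_base {t : ℝ} (h0 : 0 ≤ t) (h1 : t ≤ 1) :
    Real.sinh t ≤ t + t^3/6 + t^5/120 + 7*t^6/4320 := by
  have ha : |t| ≤ 1 := by rw [abs_of_nonneg h0]; exact h1
  have hb : |(-t)| ≤ 1 := by rwa [abs_neg]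
  have e1 := exp_taylor6 ha
  have e2 := exp_taylor6 hb
  rw [abs_neg] at e2
  rw [Real.sinh_eq]
  rw [abs_le] at e1 e2
  rw [abs_of_nonneg h0] at e1 e2
  nlinarith [e1.1, e1.2, e2.1, e2.2]

lemma cosh_base {t : ℝ} (h : |t| ≤ 1) :
    Real.cosh t ≤ Real.exp (t^2/2) := by
  have e1 := exp_taylor6 h
  have e2 := exp_taylor6 (by rwa [abs_neg] : |(-t)| ≤ 1)
  rw [abs_neg] at e2
  have hq := Real.quadratic_le_exp_of_nonneg (x := t^2/2) (by positivity)
  rw [Real.cosh_eq]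
  rw [abs_le] at e1 e2
  have ht6 : |t|^6 = t^6 := by rw [← abs_pow, abs_of_nonneg (by positivity)]
  rw [ht6] at e1 e2
  have ht2 : t^2 ≤ 1 := by
    have := sq_abs t
    nlinarith [abs_nonneg t]
  have ht64 : t^6 ≤ t^4 := by nlinarith [pow_nonneg (sq_nonneg t) 2, sq_nonneg (t^2), sq_nonneg (t^3)]
  nlinarith [e1.2, e2.2, hq, ht64, sq_nonneg (t^2)]

lemma cosh_le_exp_sq : ∀ (n : ℕ) (t : ℝ), |t| ≤ 2^n → Real.cosh t ≤ Real.exp (t^2/2) := by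
  intro n
  induction n with
  | zero => intro t ht; exact cosh_base (by simpa using ht)
  | succ n ih =>
    intro t ht
    rcases le_or_gt |t| (2^n) with h | h
    · exact ih t h
    · have hs : |t/2| ≤ 2^n := by
        rw [abs_div, abs_two]
        rw [pow_succ] at ht
        linarith
      have hc := ih (t/2) hs
      have key : Real.cosh t = 2 * Real.cosh (t/2)^2 - 1 := by
        have h2 : t = 2 * (t/2) := by ring
        rw [h2, Real.cosh_two_mul]
        have := Real.cosh_sq_sub_sinh_sq (t/2)
        ring_nf
        ring_nf at this
        linarith
      rw [key]
      have hu : (1:ℝ) ≤ Real.exp ((t/2)^2/2) := Real.one_le_exp (by positivity)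
      have hch : 0 < Real.cosh (t/2) := Real.cosh_pos (t/2)
      have hx4 : Real.exp (t^2/2) = Real.exp ((t/2)^2/2)^4 := by
        rw [show t^2/2 = ((4:ℕ):ℝ)*((t/2)^2/2) by push_cast; ring, Real.exp_nat_mul]
      rw [hx4]
      nlinarith [hc, hu, hch, sq_nonneg (Real.exp ((t/2)^2/2)^2 - 1),
        pow_le_pow_left₀ hch.le hc 2]

lemma cosh_le_exp_sq' (t : ℝ) : Real.cosh t ≤ Real.exp (t^2/2) := by
  obtain ⟨n, hn⟩ := pow_unbounded_of_one_lt |t| (by norm_num : (1:ℝ) < 2)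
  exact cosh_le_exp_sq n t hn.le

lemma sinh_main : ∀ (n : ℕ) (t : ℝ), 0 < t → t ≤ 2^n → Real.sinh t < t * Real.exp (t^2/6) := by
  intro n
  induction n with
  | zero =>
    intro t ht0 ht1
    simp only [pow_zero] at ht1
    have hb := sinh_base ht0.le ht1
    have hq := Real.quadratic_le_exp_of_nonneg (x := t^2/6) (by positivity)
    have : t + t^3/6 + t^5/120 + 7*t^6/4320 < t * (1 + t^2/6 + (t^2/6)^2/2) := by
      nlinarith [pow_pos ht0 5, pow_pos ht0 6]
    calc Real.sinh t ≤ t + t^3/6 + t^5/120 + 7*t^6/4320 := hb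
      _ < t * (1 + t^2/6 + (t^2/6)^2/2) := this
      _ ≤ t * Real.exp (t^2/6) := by
          exact mul_le_mul_of_nonneg_left hq ht0.le
  | succ n ih =>
    intro t ht0 ht1
    rcases le_or_gt t (2^n) with h | h
    · exact ih t ht0 h
    · set s := t/2 with hs
      have hs0 : 0 < s := by positivity
      have hs1 : s ≤ 2^n := by rw [pow_succ] at ht1; simp only [hs]; linarith
      have h1 := ih s hs0 hs1
      have h2 := cosh_le_exp_sq' s
      have hc : 0 < Real.cosh s := Real.cosh_pos s
      have key : Real.sinh t = 2 * Real.sinh s * Real.cosh s := by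
        rw [show t = 2 * s by rw [hs]; ring, Real.sinh_two_mul]
      rw [key]
      have : 2 * Real.sinh s * Real.cosh s < 2 * (s * Real.exp (s^2/6)) * Real.exp (s^2/2) := by
        have step1 : 2 * Real.sinh s * Real.cosh s < 2 * (s * Real.exp (s^2/6)) * Real.cosh s := by
          apply mul_lt_mul_of_pos_right _ hc
          linarith
        have step2 : 2 * (s * Real.exp (s^2/6)) * Real.cosh s
            ≤ 2 * (s * Real.exp (s^2/6)) * Real.exp (s^2/2) := by
          apply mul_le_mul_of_nonneg_left h2
          positivity
        linarith
      refine this.trans_le (le_of_eq ?_)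
      rw [show (2:ℝ)*(s*Real.exp (s^2/6))*Real.exp (s^2/2)
            = (2*s) * (Real.exp (s^2/6) * Real.exp (s^2/2)) by ring, ← Real.exp_add,
        show s^2/6+s^2/2 = (2*s)^2/6 by ring, show t = 2*s by rw [hs]; ring]

lemma sinh_div_lt_pos {t : ℝ} (h : 0 < t) : Real.sinh t / t < Real.exp (t^2/6) := by
  obtain ⟨n, hn⟩ := pow_unbounded_of_one_lt t (by norm_num : (1:ℝ) < 2)
  have := sinh_main n t h hn.le
  rw [div_lt_iff₀ h]
  linarith

lemma sinh_div_lt {t : ℝ} (ht : t ≠ 0) : Real.sinh t / t < Real.exp (t^2/6) := by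
  rcases ht.lt_or_gt with h | h
  · have h2 := sinh_div_lt_pos (t := -t) (by linarith)
    rw [Real.sinh_neg, neg_div_neg_eq, neg_sq] at h2
    exact h2
  · exact sinh_div_lt_pos h

/-- For all `y ≠ 0`, `sinh(y√3)/(y√3) < e^{y²/2}`; equivalently, if `X` is uniform on
`[-√3, √3]` then `E e^{yX} < e^{y²}` for all `y ≠ 0`. -/
theorem uniform_strict_subgaussian :
    ∀ y : ℝ, y ≠ 0 →
      Real.sinh (y * Real.sqrt 3) / (y * Real.sqrt 3) < Real.exp (y ^ 2 / 2) ∧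
      (2 * Real.sqrt 3)⁻¹ *
          (∫ x in Set.Icc (-Real.sqrt 3) (Real.sqrt 3), Real.exp (y * x))
        < Real.exp (y ^ 2) := by
  intro y hy
  have h3 : (0:ℝ) < Real.sqrt 3 := Real.sqrt_pos.2 (by norm_num)
  have hTne : y * Real.sqrt 3 ≠ 0 := mul_ne_zero hy (ne_of_gt h3)
  have hTsq : (y * Real.sqrt 3)^2/6 = y^2/2 := by
    rw [mul_pow, Real.sq_sqrt (by norm_num : (0:ℝ) ≤ 3)]; ring
  have h1 : Real.sinh (y * Real.sqrt 3) / (y * Real.sqrt 3) < Real.exp (y^2/2) := by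
    rw [← hTsq]; exact sinh_div_lt hTne
  refine ⟨h1, ?_⟩
  have hle : -Real.sqrt 3 ≤ Real.sqrt 3 := by linarith
  have hint : (∫ x in Set.Icc (-Real.sqrt 3) (Real.sqrt 3), Real.exp (y*x))
      = (Real.exp (y * Real.sqrt 3) - Real.exp (-(y * Real.sqrt 3))) / y := by
    rw [MeasureTheory.integral_Icc_eq_integral_Ioc, ← intervalIntegral.integral_of_le hle,
      intervalIntegral.integral_comp_mul_left (fun x => Real.exp x) hy,
      integral_exp, smul_eq_mul, mul_neg]
    field_simp
  rw [hint]
  have heq : (2*Real.sqrt 3)⁻¹ *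
      ((Real.exp (y * Real.sqrt 3) - Real.exp (-(y * Real.sqrt 3)))/y)
      = Real.sinh (y * Real.sqrt 3) / (y * Real.sqrt 3) := by
    rw [Real.sinh_eq]
    rw [eq_div_iff hTne]
    field_simp
  rw [heq]
  refine h1.trans_le (Real.exp_le_exp.2 ?_)
  nlinarith [sq_nonneg y]
end
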